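/- arXiv:1209.6365 — 10 statements merged into one kernel-verified Lean document; each statement's English description precedes it below -/
import Mathlib

section
/- Let 𝓗 be a finite collection of affine hyperplanes in ℝⁿ, let Δ(𝓗) be the collection of subsets of 𝓗 with nonempty common intersection, and for intersecting σ define r(σ) = n − dim(∩σ). Then (𝓗, Δ(𝓗), r) is a semimatroid. -/
/-- A semimatroid on ground type `α`: a nonempty downward-closed collection `Δ` of finite
subsets (a simplicial complex) together with a rank function `r` satisfying the five
semimatroid axioms of Ardila. -/
structure IsSemimatroid {α : Type*} [DecidableEq α] (Δ : Finset α → Prop) (r : Finset α → ℕ) :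
    Prop where
  nonempty : ∃ σ, Δ σ
  down_closed : ∀ ⦃σ τ : Finset α⦄, Δ σ → τ ⊆ σ → Δ τ
  rank_le_card : ∀ ⦃σ⦄, Δ σ → r σ ≤ σ.card
  rank_mono : ∀ ⦃σ τ⦄, Δ σ → Δ τ → σ ⊆ τ → r σ ≤ r τ
  submodular : ∀ ⦃σ τ⦄, Δ σ → Δ τ → Δ (σ ∪ τ) → r (σ ∪ τ) + r (σ ∩ τ) ≤ r σ + r τ
  union_mem : ∀ ⦃σ τ⦄, Δ σ → Δ τ → r σ = r (σ ∩ τ) → Δ (σ ∪ τ)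
  exchange : ∀ ⦃σ τ⦄, Δ σ → Δ τ → r σ < r τ → ∃ y ∈ τ \ σ, Δ (insert y σ)

-- A finite family of affine hyperplanes in `ℝⁿ` is given by normal vectors and constants.
variable {n m : ℕ}

/-- A set of hyperplanes is intersecting if there is a common point. -/
def Intersecting (H : Fin m → (Fin n → ℝ) × ℝ) (σ : Finset (Fin m)) : Prop :=
  ∃ x : Fin n → ℝ, ∀ i ∈ σ, ∑ j, (H i).1 j * x j = (H i).2

/-- The direction space of the intersection: vectors orthogonal to all normals of `σ`. -/
noncomputable def directionSpace (H : Fin m → (Fin n → ℝ) × ℝ) (σ : Finset (Fin m)) :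
    Submodule ℝ (Fin n → ℝ) :=
  ⨅ i ∈ σ, LinearMap.ker (∑ j, (H i).1 j • (LinearMap.proj j : (Fin n → ℝ) →ₗ[ℝ] ℝ))

/-- The rank of an intersecting set: the codimension `n − dim(∩σ)` of the intersection. -/
noncomputable def arrRank (H : Fin m → (Fin n → ℝ) × ℝ) (σ : Finset (Fin m)) : ℕ :=
  n - Module.finrank ℝ (directionSpace H σ)

namespace HypArr

/-- The linear functional of hyperplane `i`. -/
noncomputable def L (H : Fin m → (Fin n → ℝ) × ℝ) (i : Fin m) :
    Module.Dual ℝ (Fin n → ℝ) :=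
  ∑ j, (H i).1 j • (LinearMap.proj j : (Fin n → ℝ) →ₗ[ℝ] ℝ)

lemma L_apply (H : Fin m → (Fin n → ℝ) × ℝ) (i : Fin m) (x : Fin n → ℝ) :
    L H i x = ∑ j, (H i).1 j * x j := by
  simp [L, LinearMap.sum_apply, LinearMap.smul_apply, smul_eq_mul]

/-- Span of the functionals of `σ`. -/
noncomputable def M (H : Fin m → (Fin n → ℝ) × ℝ) (σ : Finset (Fin m)) :
    Submodule ℝ (Module.Dual ℝ (Fin n → ℝ)) :=
  Submodule.span ℝ (L H '' σ)

lemma direction_eq (H : Fin m → (Fin n → ℝ) × ℝ) (σ : Finset (Fin m)) :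
    directionSpace H σ = (M H σ).dualCoannihilator := by
  ext x
  simp only [directionSpace, Submodule.mem_iInf, LinearMap.mem_ker,
    Submodule.mem_dualCoannihilator]
  constructor
  · intro h φ hφ
    induction hφ using Submodule.span_induction with
    | mem f hf =>
      obtain ⟨i, hi, rfl⟩ := hf
      exact h i hi
    | zero => simp
    | add f g _ _ hf hg => simp [hf, hg]
    | smul c f _ hf => simp [hf]
  · intro h i hi
    exact h (L H i) (Submodule.subset_span ⟨i, hi, rfl⟩)

lemma finrank_M_le (H : Fin m → (Fin n → ℝ) × ℝ) (σ : Finset (Fin m)) :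
    Module.finrank ℝ (M H σ) ≤ n := by
  have := Submodule.finrank_le (M H σ)
  rwa [Subspace.dual_finrank_eq, Module.finrank_pi ℝ, Fintype.card_fin] at this

lemma arrRank_eq (H : Fin m → (Fin n → ℝ) × ℝ) (σ : Finset (Fin m)) :
    arrRank H σ = Module.finrank ℝ (M H σ) := by
  have key := Subspace.finrank_add_finrank_dualCoannihilator_eq (M H σ)
  rw [Module.finrank_pi ℝ, Fintype.card_fin] at key
  rw [arrRank, direction_eq]
  omega

lemma M_mono (H : Fin m → (Fin n → ℝ) × ℝ) {σ τ : Finset (Fin m)} (h : σ ⊆ τ) :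
    M H σ ≤ M H τ :=
  Submodule.span_mono (Set.image_mono (by exact_mod_cast h))

end HypArr


open HypArr

/-- For a finite collection `𝓗` of affine hyperplanes in `ℝⁿ`, the intersecting
subsets `Δ(𝓗)` together with the codimension rank `r(σ) = n − dim(∩σ)` form a semimatroid. -/
theorem hyperplane_arrangement_semimatroid (H : Fin m → (Fin n → ℝ) × ℝ)
    (hH : ∀ i, (H i).1 ≠ 0) :
    IsSemimatroid (Intersecting H) (arrRank H) := by
  constructor
  · exact ⟨∅, 0, by simp⟩
  · rintro σ τ ⟨x, hx⟩ hsub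
    exact ⟨x, fun i hi => hx i (hsub hi)⟩
  · intro σ _
    rw [arrRank_eq, M, Set.image_eq_range]
    calc Module.finrank ℝ (Submodule.span ℝ (Set.range fun i : ↥σ => L H i))
        ≤ Fintype.card ↥σ := finrank_range_le_card _
      _ = σ.card := Fintype.card_coe σ
  · intro σ τ _ _ hsub
    rw [arrRank_eq, arrRank_eq]
    exact Submodule.finrank_mono (M_mono H hsub)
  · intro σ τ _ _ _
    simp only [arrRank_eq]
    have h1 : M H (σ ∪ τ) = M H σ ⊔ M H τ := by
      rw [M, M, M, ← Submodule.span_union, ← Set.image_union]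
      congr 1
      simp [Finset.coe_union]
    have h2 : M H (σ ∩ τ) ≤ M H σ ⊓ M H τ :=
      le_inf (M_mono H (Finset.inter_subset_left)) (M_mono H (Finset.inter_subset_right))
    have h3 := Submodule.finrank_sup_add_finrank_inf_eq (M H σ) (M H τ)
    have h4 := Submodule.finrank_mono h2
    rw [h1]
    omega
  · rintro σ τ ⟨x, hx⟩ ⟨y, hy⟩ hr
    rw [arrRank_eq, arrRank_eq] at hr
    have hle : M H (σ ∩ τ) ≤ M H σ := M_mono H Finset.inter_subset_left
    have heq : M H (σ ∩ τ) = M H σ :=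
      Submodule.eq_of_le_of_finrank_le hle (le_of_eq hr)
    have hker : ∀ φ ∈ M H (σ ∩ τ), φ (y - x) = 0 := by
      intro φ hφ
      induction hφ using Submodule.span_induction with
      | mem f hf =>
        obtain ⟨i, hi, rfl⟩ := hf
        have hi' : i ∈ σ ∩ τ := hi
        rw [map_sub, L_apply, L_apply,
          hx i (Finset.mem_of_mem_inter_left hi'), hy i (Finset.mem_of_mem_inter_right hi'),
          sub_self]
      | zero => simp
      | add f g _ _ hf hg => simp [hf, hg]
      | smul c f _ hf => simp [hf]
    refine ⟨y, fun i hi => ?_⟩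
    rcases Finset.mem_union.mp hi with hi | hi
    · have hLi : L H i ∈ M H (σ ∩ τ) := by
        rw [heq]; exact Submodule.subset_span ⟨i, hi, rfl⟩
      have := hker _ hLi
      rw [map_sub, sub_eq_zero] at this
      rw [← L_apply, this, L_apply]
      exact hx i hi
    · exact hy i hi
  · rintro σ τ ⟨x, hx⟩ ⟨y, hy⟩ hr
    rw [arrRank_eq, arrRank_eq] at hr
    -- find i ∈ τ with L H i ∉ M H σ
    have hex : ∃ i ∈ τ, L H i ∉ M H σ := by
      by_contra hc
      push_neg at hc
      have : M H τ ≤ M H σ := by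
        rw [M, Submodule.span_le]
        rintro f ⟨i, hi, rfl⟩
        exact hc i (by exact_mod_cast hi)
      exact absurd (Submodule.finrank_mono this) (by omega)
    obtain ⟨i, hiτ, hiM⟩ := hex
    have hiσ : i ∉ σ := fun h => hiM (Submodule.subset_span ⟨i, by exact_mod_cast h, rfl⟩)
    refine ⟨i, Finset.mem_sdiff.mpr ⟨hiτ, hiσ⟩, ?_⟩
    -- find v in dualCoannihilator (M H σ) with L H i v ≠ 0
    have hv : ∃ v ∈ (M H σ).dualCoannihilator, L H i v ≠ 0 := by
      by_contra hc
      push_neg at hc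
      have : L H i ∈ (M H σ).dualCoannihilator.dualAnnihilator := by
        rw [Submodule.mem_dualAnnihilator]
        exact hc
      rw [Subspace.dualCoannihilator_dualAnnihilator_eq] at this
      exact hiM this
    obtain ⟨v, hv, hv0⟩ := hv
    refine ⟨x + (((H i).2 - L H i x) / L H i v) • v, ?_⟩
    intro k hk
    rw [← L_apply]
    rcases Finset.mem_insert.mp hk with rfl | hk
    · rw [map_add, map_smul, smul_eq_mul, div_mul_cancel₀ _ hv0]
      ring
    · have hkv : L H k v = 0 := by
        rw [Submodule.mem_dualCoannihilator] at hv
        exact hv _ (Submodule.subset_span ⟨k, by exact_mod_cast hk, rfl⟩)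
      rw [map_add, map_smul, hkv, smul_zero, add_zero, L_apply]
      exact hx k hk
end

section
/- In a semimatroid (S, Δ, r), if e ∈ S with {e} ∈ Δ and e is not a loop, then the contraction 𝒞/e = (S \ {e}, lk_e(Δ), r') with r'(σ) = r(σ ∪ {e}) − r({e}) is again a semimatroid. -/
/-- If `{e} ∈ Δ` and `e` is not a loop (`r {e} ≠ 0`), then the contraction
`𝒞/e = (S \ {e}, lk_e(Δ), r')` with `r'(σ) = r(σ ∪ {e}) − r({e})` is again a semimatroid.
The link `lk_e(Δ)` consists of the faces `τ` with `e ∉ τ` and `τ ∪ {e} ∈ Δ`. -/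
theorem contraction_is_semimatroid {α : Type*} [DecidableEq α]
    (Δ : Finset α → Prop) (r : Finset α → ℕ) (h : IsSemimatroid Δ r)
    (e : α) (he : Δ {e}) (hloop : r {e} ≠ 0) :
    IsSemimatroid (fun τ : Finset α => e ∉ τ ∧ Δ (insert e τ))
      (fun σ : Finset α => r (insert e σ) - r {e}) := by
  have hre : r {e} = 1 := by
    have := h.rank_le_card he
    rw [Finset.card_singleton] at this
    omega
  have hge : ∀ ⦃σ : Finset α⦄, Δ (insert e σ) → 1 ≤ r (insert e σ) := by
    intro σ hσ
    have := h.rank_mono he hσ (by simp)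
    omega
  have hu : ∀ σ τ : Finset α, insert e σ ∪ insert e τ = insert e (σ ∪ τ) := by
    intro σ τ; ext x; simp [Finset.mem_insert, or_assoc]
  have hi : ∀ σ τ : Finset α, insert e σ ∩ insert e τ = insert e (σ ∩ τ) := by
    intro σ τ; ext x; simp [Finset.mem_insert]; tauto
  constructor
  · exact ⟨∅, by simpa using he⟩
  · rintro σ τ ⟨heσ, hσ⟩ hsub
    exact ⟨fun hx => heσ (hsub hx), h.down_closed hσ (Finset.insert_subset_insert _ hsub)⟩
  · rintro σ ⟨heσ, hσ⟩
    have h1 := h.rank_le_card hσ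
    rw [Finset.card_insert_of_notMem heσ] at h1
    omega
  · rintro σ τ ⟨_, hσ⟩ ⟨_, hτ⟩ hsub
    have := h.rank_mono hσ hτ (Finset.insert_subset_insert _ hsub)
    omega
  · rintro σ τ ⟨heσ, hσ⟩ ⟨heτ, hτ⟩ ⟨heu, hun⟩
    have hsm := h.submodular hσ hτ (by rw [hu]; exact hun)
    rw [hu, hi] at hsm
    have hin : Δ (insert e (σ ∩ τ)) :=
      h.down_closed hσ (Finset.insert_subset_insert _ Finset.inter_subset_left)
    have h1 := hge hσ; have h2 := hge hτ; have h3 := hge hin; have h4 := hge hun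
    omega
  · rintro σ τ ⟨heσ, hσ⟩ ⟨heτ, hτ⟩ hr
    refine ⟨by simp [heσ, heτ], ?_⟩
    have hin : Δ (insert e (σ ∩ τ)) :=
      h.down_closed hσ (Finset.insert_subset_insert _ Finset.inter_subset_left)
    have h1 := hge hσ; have h3 := hge hin
    have : r (insert e σ) = r (insert e σ ∩ insert e τ) := by rw [hi]; omega
    have := h.union_mem hσ hτ this
    rwa [hu] at this
  · rintro σ τ ⟨heσ, hσ⟩ ⟨heτ, hτ⟩ hr
    have h1 := hge hσ; have h2 := hge hτ
    obtain ⟨y, hy, hins⟩ := h.exchange hσ hτ (by omega)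
    simp only [Finset.mem_sdiff, Finset.mem_insert] at hy
    obtain ⟨hy1, hy2⟩ := hy
    have hye : y ≠ e := fun hh => hy2 (Or.inl hh)
    refine ⟨y, Finset.mem_sdiff.mpr ⟨hy1.resolve_left hye, fun hx => hy2 (Or.inr hx)⟩, ?_, ?_⟩
    · simp [Ne.symm hye, heσ]
    · rwa [Finset.insert_comm] at hins
end

section
/- The Tutte polynomial of a semimatroid satisfies deletion-contraction: if e ∈ S is neither a loop nor a coloop and {e} ∈ Δ, then T_𝒞(x,y) = T_{𝒞−e}(x,y) + T_{𝒞/e}(x,y). -/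
/-- The faces of the complex (a finite downward-closed family) of the deletion at `e`. -/
def delC {α : Type*} [DecidableEq α] (Δ : Finset (Finset α)) (e : α) : Finset (Finset α) :=
  Δ.filter (fun τ => e ∉ τ)

/-- The faces of the link (contraction complex) at `e`. -/
def lkC {α : Type*} [DecidableEq α] (Δ : Finset (Finset α)) (e : α) : Finset (Finset α) :=
  (Δ.filter (fun τ => e ∈ τ)).image (fun τ => τ.erase e)

/-- The rank of a semimatroid: the maximum rank of a face (the common size of the bases). -/
def rkOf {α : Type*} (Δ : Finset (Finset α)) (r : Finset α → ℕ) : ℕ := Δ.sup r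

/-- The Tutte polynomial of a semimatroid, evaluated at real numbers `x, y`:
`T(x,y) = Σ_{σ ∈ Δ} (x−1)^{r_𝒞 − r(σ)} (y−1)^{|σ| − r(σ)}`. -/
noncomputable def tutte {α : Type*} (Δ : Finset (Finset α)) (r : Finset α → ℕ)
    (x y : ℝ) : ℝ :=
  ∑ σ ∈ Δ, (x - 1) ^ (rkOf Δ r - r σ) * (y - 1) ^ (σ.card - r σ)

/-- `B` is a basis: an independent face maximal among independent faces. -/
def IsSMBasis {α : Type*} (Δ : Finset (Finset α)) (r : Finset α → ℕ) (B : Finset α) : Prop :=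
  B ∈ Δ ∧ r B = B.card ∧ ∀ X ∈ Δ, r X = X.card → B ⊆ X → X = B

/-- deletion-contraction for the Tutte polynomial of a semimatroid: if
`{e} ∈ Δ` and `e` is neither a loop (`r {e} ≠ 0`) nor a coloop (some basis avoids `e`),
then `T_𝒞 = T_{𝒞−e} + T_{𝒞/e}`, where the contraction has rank `r'(σ) = r(σ∪{e}) − r({e})`. -/
theorem tutte_deletion_contraction {α : Type*} [DecidableEq α]
    (Δ : Finset (Finset α)) (r : Finset α → ℕ)
    (h : IsSemimatroid (· ∈ Δ) r)
    (e : α) (he : ({e} : Finset α) ∈ Δ)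
    (hnotloop : r {e} ≠ 0)
    (hnotcoloop : ∃ B, IsSMBasis Δ r B ∧ e ∉ B) :
    ∀ x y : ℝ,
      tutte Δ r x y =
        tutte (delC Δ e) r x y +
        tutte (lkC Δ e) (fun σ => r (insert e σ) - r {e}) x y := by
  intro x y
  obtain ⟨B, ⟨hBΔ, hBind, hBmax⟩, heB⟩ := hnotcoloop
  have hre : r {e} = 1 := by
    have h1 := h.rank_le_card he
    simp only [Finset.card_singleton] at h1
    omega
  set rk := rkOf Δ r with hrkdef
  have hne : Δ.Nonempty := by
    obtain ⟨σ, hσ⟩ := h.nonempty; exact ⟨σ, hσ⟩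
  obtain ⟨τ, hτΔ, hτ⟩ := Finset.exists_mem_eq_sup Δ hne r
  have hτrk : r τ = rk := hτ.symm
  have hle_rk : ∀ σ ∈ Δ, r σ ≤ rk := fun σ hσ => Finset.le_sup hσ
  -- grow any face to a face of maximal rank
  have grow : ∀ n (σ : Finset α), σ ∈ Δ → (τ \ σ).card ≤ n →
      ∃ σ', σ ⊆ σ' ∧ σ' ∈ Δ ∧ r σ' = rk := by
    intro n
    induction n with
    | zero =>
      intro σ hσ hc
      have hsub : τ ⊆ σ := by
        rw [← Finset.sdiff_eq_empty_iff_subset]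
        exact Finset.card_eq_zero.1 (Nat.le_zero.1 hc)
      refine ⟨σ, subset_rfl, hσ, le_antisymm (hle_rk σ hσ) ?_⟩
      rw [← hτrk]; exact h.rank_mono hτΔ hσ hsub
    | succ n ih =>
      intro σ hσ hc
      by_cases hlt : r σ < r τ
      · obtain ⟨y, hy, hyΔ⟩ := h.exchange hσ hτΔ hlt
        obtain ⟨hyτ, hyσ⟩ := Finset.mem_sdiff.1 hy
        have hss : τ \ insert y σ ⊂ τ \ σ := by
          refine Finset.ssubset_iff_of_subset
            (Finset.sdiff_subset_sdiff subset_rfl (Finset.subset_insert y σ)) |>.2 ?_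
          exact ⟨y, Finset.mem_sdiff.2 ⟨hyτ, hyσ⟩, by simp⟩
        have hcard := Finset.card_lt_card hss
        obtain ⟨σ', h1, h2, h3⟩ := ih (insert y σ) hyΔ (by omega)
        exact ⟨σ', (Finset.subset_insert y σ).trans h1, h2, h3⟩
      · refine ⟨σ, subset_rfl, hσ, le_antisymm (hle_rk σ hσ) ?_⟩
        omega
  -- augmentation inside a face
  have aug : ∀ σ ∈ Δ, ∀ B' ⊆ σ, r B' = B'.card → r B' < r σ →
      ∃ y ∈ σ, y ∉ B' ∧ r (insert y B') = B'.card + 1 := by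
    intro σ hσ B' hBσ hBind' hlt
    by_contra hcon
    push_neg at hcon
    have hall : ∀ y ∈ σ, y ∉ B' → r (insert y B') = B'.card := by
      intro y hy hyB
      have h1 : insert y B' ∈ Δ := h.down_closed hσ (Finset.insert_subset hy hBσ)
      have h2 := h.rank_le_card h1
      rw [Finset.card_insert_of_notMem hyB] at h2
      have h3 : r B' ≤ r (insert y B') :=
        h.rank_mono (h.down_closed hσ hBσ) h1 (Finset.subset_insert _ _)
      have h4 := hcon y hy hyB
      omega
    have key : ∀ A : Finset α, A ⊆ σ → r (B' ∪ A) = B'.card := by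
      intro A
      induction A using Finset.induction_on with
      | empty => intro _; simpa using hBind'
      | @insert a A' ha ih =>
        intro hsub
        have haσ : a ∈ σ := hsub (Finset.mem_insert_self a A')
        have hA'σ : A' ⊆ σ := (Finset.subset_insert a A').trans hsub
        have hXΔ : B' ∪ A' ∈ Δ := h.down_closed hσ (Finset.union_subset hBσ hA'σ)
        by_cases haB : a ∈ B'
        · have : B' ∪ insert a A' = B' ∪ A' := by
            ext z; simp only [Finset.mem_union, Finset.mem_insert]
            constructor
            · rintro (hz | rfl | hz) <;> tauto
            · tauto
          rw [this]; exact ih hA'σ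
        · have hYΔ : insert a B' ∈ Δ := h.down_closed hσ (Finset.insert_subset haσ hBσ)
          have hUΔ : (B' ∪ A') ∪ insert a B' ∈ Δ := by
            apply h.down_closed hσ
            apply Finset.union_subset (Finset.union_subset hBσ hA'σ)
            exact Finset.insert_subset haσ hBσ
          have hsubm := h.submodular hXΔ hYΔ hUΔ
          have hBint : B' ⊆ (B' ∪ A') ∩ insert a B' := by
            intro z hz
            simp only [Finset.mem_inter, Finset.mem_union, Finset.mem_insert]
            tauto
          have hintΔ : (B' ∪ A') ∩ insert a B' ∈ Δ :=
            h.down_closed hXΔ (Finset.inter_subset_left)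
          have hint : B'.card ≤ r ((B' ∪ A') ∩ insert a B') := by
            rw [← hBind']
            exact h.rank_mono (h.down_closed hσ hBσ) hintΔ hBint
          have hX : r (B' ∪ A') = B'.card := ih hA'σ
          have hY : r (insert a B') = B'.card := hall a haσ haB
          have hUeq : (B' ∪ A') ∪ insert a B' = B' ∪ insert a A' := by
            ext z; simp only [Finset.mem_union, Finset.mem_insert]; tauto
          have hUmono : r B' ≤ r (B' ∪ insert a A') := by
            refine h.rank_mono (h.down_closed hσ hBσ) ?_ Finset.subset_union_left
            exact hUeq ▸ hUΔ
          rw [hUeq] at hsubm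
          omega
    have hfin := key σ subset_rfl
    rw [Finset.union_eq_right.2 hBσ] at hfin
    omega
  -- the basis B has maximal rank
  have hBrk : r B = rk := by
    rcases eq_or_lt_of_le (hle_rk B hBΔ) with heq | hlt
    · exact heq
    · obtain ⟨σ, hBsub, hσΔ, hσrk⟩ := grow (τ \ B).card B hBΔ le_rfl
      have hlt' : r B < r σ := by omega
      obtain ⟨y, hyσ, hyB, hy1⟩ := aug σ hσΔ B hBsub hBind hlt'
      have hXΔ : insert y B ∈ Δ := h.down_closed hσΔ (Finset.insert_subset hyσ hBsub)
      have hXind : r (insert y B) = (insert y B).card := by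
        rw [hy1, Finset.card_insert_of_notMem hyB]
      have := hBmax (insert y B) hXΔ hXind (Finset.subset_insert _ _)
      exact absurd (this ▸ Finset.mem_insert_self y B) hyB
  -- rank of deletion
  have hdel : rkOf (delC Δ e) r = rk := by
    apply le_antisymm
    · exact Finset.sup_mono (Finset.filter_subset _ _)
    · rw [← hBrk]
      exact Finset.le_sup (Finset.mem_filter.2 ⟨hBΔ, heB⟩)
  -- a face of maximal rank containing e
  obtain ⟨σ0, hσ0sub, hσ0Δ, hσ0rk⟩ := grow (τ \ {e}).card {e} he le_rfl
  have heσ0 : e ∈ σ0 := hσ0sub (Finset.mem_singleton_self e)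
  have hr1 : ∀ σ ∈ Δ, e ∈ σ → 1 ≤ r σ := by
    intro σ hσ heσ
    rw [← hre]
    exact h.rank_mono he hσ (Finset.singleton_subset_iff.2 heσ)
  -- rank of contraction
  set r' : Finset α → ℕ := fun σ => r (insert e σ) - r {e} with hr'def
  have hlk : rkOf (lkC Δ e) r' = rk - 1 := by
    apply le_antisymm
    · apply Finset.sup_le
      intro t ht
      obtain ⟨σ, hσ, rfl⟩ := Finset.mem_image.1 ht
      obtain ⟨hσΔ, heσ⟩ := Finset.mem_filter.1 hσ
      have : r' (σ.erase e) = r σ - 1 := by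
        simp only [hr'def, Finset.insert_erase heσ, hre]
      rw [this]
      have := hle_rk σ hσΔ
      omega
    · have hmem : σ0.erase e ∈ lkC Δ e :=
        Finset.mem_image.2 ⟨σ0, Finset.mem_filter.2 ⟨hσ0Δ, heσ0⟩, rfl⟩
      have h1 : r' (σ0.erase e) = rk - 1 := by
        simp only [hr'def, Finset.insert_erase heσ0, hσ0rk, hre]
      rw [← h1]
      exact Finset.le_sup hmem
  -- split the sum
  unfold tutte
  rw [hdel, hlk, ← hrkdef]
  rw [← Finset.sum_filter_add_sum_filter_not Δ (fun σ => e ∈ σ)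
    (fun σ => (x - 1) ^ (rk - r σ) * (y - 1) ^ (σ.card - r σ))]
  have hdelC : delC Δ e = Δ.filter (fun σ => ¬ e ∈ σ) := rfl
  rw [← hdelC]
  rw [add_comm]
  congr 1
  -- the sum over faces containing e equals the sum over the link
  unfold lkC
  rw [Finset.sum_image]
  · apply Finset.sum_congr rfl
    intro σ hσ
    obtain ⟨hσΔ, heσ⟩ := Finset.mem_filter.1 hσ
    have hr'σ : r' (σ.erase e) = r σ - 1 := by
      simp only [hr'def, Finset.insert_erase heσ, hre]
    have hcard : (σ.erase e).card = σ.card - 1 := Finset.card_erase_of_mem heσ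
    have h1 : 1 ≤ r σ := hr1 σ hσΔ heσ
    have h2 : r σ ≤ rk := hle_rk σ hσΔ
    have h3 : r σ ≤ σ.card := h.rank_le_card hσΔ
    rw [hr'σ, hcard]
    congr 1 <;> congr 1 <;> omega
  · intro a ha b hb hab
    obtain ⟨_, hea⟩ := Finset.mem_filter.1 ha
    obtain ⟨_, heb⟩ := Finset.mem_filter.1 hb
    rw [← Finset.insert_erase hea, ← Finset.insert_erase heb, show a.erase e = b.erase e from hab]
end

section
/- If e is a loop of a semimatroid 𝒞, then T_𝒞(x,y) = y · T_{𝒞−e}(x,y). -/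
/-- if `e` is a loop of a semimatroid (`{e} ∈ Δ` and `r {e} = 0`), then
`T_𝒞(x,y) = y · T_{𝒞−e}(x,y)`. -/
theorem tutte_loop {α : Type*} [DecidableEq α]
    (Δ : Finset (Finset α)) (r : Finset α → ℕ)
    (h : IsSemimatroid (· ∈ Δ) r)
    (e : α) (he : ({e} : Finset α) ∈ Δ) (hloop : r {e} = 0) :
    ∀ x y : ℝ, tutte Δ r x y = y * tutte (delC Δ e) r x y := by
    classical
  intro x y
  have hempty : (∅ : Finset α) ∈ Δ := h.down_closed he (Finset.empty_subset _)
  have hr0 : r ∅ = 0 := Nat.le_zero.mp (by simpa using h.rank_le_card hempty)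
  have hins : ∀ τ ∈ Δ, e ∉ τ → insert e τ ∈ Δ := by
    intro τ hτ heτ
    have := h.union_mem he hτ
      (by rw [Finset.singleton_inter_of_notMem heτ, hr0, hloop])
    simpa [← Finset.insert_eq] using this
  have hrins : ∀ τ ∈ Δ, e ∉ τ → r (insert e τ) = r τ := by
    intro τ hτ heτ
    have hiu : {e} ∪ τ ∈ Δ := by
      simpa [← Finset.insert_eq] using hins τ hτ heτ
    have h1 := h.submodular he hτ hiu
    rw [Finset.singleton_inter_of_notMem heτ, hr0, hloop, ← Finset.insert_eq] at h1
    have h2 : r τ ≤ r (insert e τ) :=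
      h.rank_mono hτ (hins τ hτ heτ) (Finset.subset_insert _ _)
    omega
  -- rank equality
  have hdelsub : delC Δ e ⊆ Δ := Finset.filter_subset _ _
  have hrk : rkOf (delC Δ e) r = rkOf Δ r := by
    apply le_antisymm
    · exact Finset.sup_mono hdelsub
    · apply Finset.sup_le
      intro σ hσ
      by_cases heσ : e ∈ σ
      · have hτ : σ.erase e ∈ Δ := h.down_closed hσ (Finset.erase_subset _ _)
        have : r σ = r (σ.erase e) := by
          have := hrins (σ.erase e) hτ (Finset.notMem_erase _ _)
          rwa [Finset.insert_erase heσ] at this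
        rw [this]
        exact Finset.le_sup (by simp [delC, hτ])
      · exact Finset.le_sup (by simp [delC, hσ, heσ])
  -- split the sum
  have hsplit := Finset.sum_filter_add_sum_filter_not Δ (fun σ => e ∈ σ)
    (fun σ => (x - 1) ^ (rkOf Δ r - r σ) * (y - 1) ^ (σ.card - r σ))
  have hfilt : Δ.filter (fun σ => ¬ e ∈ σ) = delC Δ e := rfl
  have himg : Δ.filter (fun σ => e ∈ σ) = (delC Δ e).image (insert e) := by
    ext σ
    simp only [Finset.mem_filter, Finset.mem_image, delC]
    constructor
    · rintro ⟨hσ, heσ⟩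
      exact ⟨σ.erase e, by simp [h.down_closed hσ (Finset.erase_subset _ _)],
        Finset.insert_erase heσ⟩
    · rintro ⟨τ, hτ, rfl⟩
      exact ⟨hins τ hτ.1 hτ.2, Finset.mem_insert_self _ _⟩
  have hsum1 : ∑ σ ∈ Δ.filter (fun σ => e ∈ σ),
      (x - 1) ^ (rkOf Δ r - r σ) * (y - 1) ^ (σ.card - r σ)
      = (y - 1) * ∑ σ ∈ delC Δ e,
      (x - 1) ^ (rkOf Δ r - r σ) * (y - 1) ^ (σ.card - r σ) := by
    rw [himg, Finset.sum_image, Finset.mul_sum]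
    · apply Finset.sum_congr rfl
      intro τ hτ
      simp only [Finset.mem_filter, delC] at hτ
      rw [hrins τ hτ.1 hτ.2, Finset.card_insert_of_notMem hτ.2]
      have : τ.card + 1 - r τ = (τ.card - r τ) + 1 := by
        have := h.rank_le_card hτ.1; omega
      rw [this, pow_succ]
      ring
    · intro a ha b hb hab
      simp only [Finset.mem_coe, Finset.mem_filter, delC] at ha hb
      have := congrArg (fun s => Finset.erase s e) hab
      simpa [Finset.erase_insert ha.2, Finset.erase_insert hb.2] using this
  unfold tutte
  rw [hrk, ← hsplit, hsum1, hfilt]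
  ring
end

section
/- If e is a coloop of a semimatroid 𝒞, then T_𝒞(x,y) = x · T_{𝒞/e}(x,y). -/
namespace TCaux

variable {α : Type*} [DecidableEq α] {Δ : Finset (Finset α)} {r : Finset α → ℕ}

lemma empty_mem (h : IsSemimatroid (· ∈ Δ) r) : ∅ ∈ Δ := by
  obtain ⟨σ, hσ⟩ := h.nonempty
  exact h.down_closed hσ (Finset.empty_subset σ)

lemma rank_empty (h : IsSemimatroid (· ∈ Δ) r) : r ∅ = 0 :=
  Nat.le_zero.mp (by simpa using h.rank_le_card (empty_mem h))

lemma rank_insert_le (h : IsSemimatroid (· ∈ Δ) r) {σ : Finset α} (hσ : σ ∈ Δ)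
    {x : α} (hx : insert x σ ∈ Δ) : r (insert x σ) ≤ r σ + 1 := by
  by_cases hxσ : x ∈ σ
  · rw [Finset.insert_eq_self.2 hxσ]; omega
  · have hx1 : ({x} : Finset α) ∈ Δ := h.down_closed hx (by simp)
    have hus : σ ∪ {x} = insert x σ := by ext a; simp [or_comm]
    have hsub := h.submodular hσ hx1 (by rwa [hus])
    rw [hus, Finset.inter_singleton_of_notMem hxσ, rank_empty h] at hsub
    have h1 : r {x} ≤ 1 := by simpa using h.rank_le_card hx1
    omega

lemma rank_diff_le (h : IsSemimatroid (· ∈ Δ) r) :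
    ∀ n (A B : Finset α), B ∈ Δ → A ⊆ B → B.card ≤ A.card + n → r B ≤ r A + n := by
  intro n
  induction n with
  | zero =>
    intro A B hB hAB hc
    have hAB' : A = B := Finset.eq_of_subset_of_card_le hAB (by omega)
    rw [hAB']; omega
  | succ n ih =>
    intro A B hB hAB hc
    rcases eq_or_lt_of_le (Finset.card_le_card hAB) with hcc | hcc
    · have hAB' : A = B := Finset.eq_of_subset_of_card_le hAB (by omega)
      rw [hAB']; omega
    · have hss : A ⊂ B := hAB.ssubset_of_ne (by
        intro hh; rw [hh] at hcc; omega)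
      obtain ⟨x, hxB, hxA⟩ := Finset.exists_of_ssubset hss
      have hsub : insert x A ⊆ B := Finset.insert_subset hxB hAB
      have h1 : r B ≤ r (insert x A) + n := by
        apply ih _ _ hB hsub
        rw [Finset.card_insert_of_notMem hxA]; omega
      have h2 : r (insert x A) ≤ r A + 1 :=
        rank_insert_le h (h.down_closed hB hAB) (h.down_closed hB hsub)
      omega

lemma indep_subset (h : IsSemimatroid (· ∈ Δ) r) {A B : Finset α} (hB : B ∈ Δ)
    (hAB : A ⊆ B) (hInd : r B = B.card) : r A = A.card := by
  have h1 := rank_diff_le h (B.card - A.card) A B hB hAB (by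
    have := Finset.card_le_card hAB; omega)
  have h2 := h.rank_le_card (h.down_closed hB hAB)
  have h3 := Finset.card_le_card hAB
  omega

lemma exists_step (h : IsSemimatroid (· ∈ Δ) r) {σ τ : Finset α} (hσ : σ ∈ Δ)
    (hτσ : τ ⊆ σ) (hlt : r τ < r σ) : ∃ y ∈ σ \ τ, r (insert y τ) = r τ + 1 := by
  by_contra hcon
  push_neg at hcon
  have hτ : τ ∈ Δ := h.down_closed hσ hτσ
  have hall : ∀ y ∈ σ \ τ, r (insert y τ) = r τ := by
    intro y hy
    have hy' := hcon y hy
    have hyτ : y ∉ τ := (Finset.mem_sdiff.mp hy).2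
    have hins : insert y τ ⊆ σ :=
      Finset.insert_subset (Finset.mem_sdiff.mp hy).1 hτσ
    have h1 : r (insert y τ) ≤ r τ + 1 :=
      rank_insert_le h hτ (h.down_closed hσ hins)
    have h2 : r τ ≤ r (insert y τ) :=
      h.rank_mono hτ (h.down_closed hσ hins) (Finset.subset_insert _ _)
    omega
  have key : ∀ S : Finset α, S ⊆ σ \ τ → r (τ ∪ S) = r τ := by
    intro S
    induction S using Finset.induction_on with
    | empty => intro _; simp
    | @insert y S hyS ih =>
      intro hS
      have hyin : y ∈ σ \ τ := hS (Finset.mem_insert_self _ _)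
      have hSsub : S ⊆ σ \ τ := (Finset.insert_subset_iff.mp hS).2
      have hyτ : y ∉ τ := (Finset.mem_sdiff.mp hyin).2
      have hyσ : y ∈ σ := (Finset.mem_sdiff.mp hyin).1
      have hA : τ ∪ S ⊆ σ :=
        Finset.union_subset hτσ (hSsub.trans (Finset.sdiff_subset))
      have hB : insert y τ ⊆ σ := Finset.insert_subset hyσ hτσ
      have hAB : (τ ∪ S) ∪ insert y τ = τ ∪ insert y S := by
        ext a
        simp only [Finset.mem_union, Finset.mem_insert]
        tauto
      have hABi : (τ ∪ S) ∩ insert y τ = τ := by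
        ext a
        simp only [Finset.mem_inter, Finset.mem_union, Finset.mem_insert]
        constructor
        · rintro ⟨h1 | h1, h2 | h2⟩ <;> first | assumption | (subst h2; exact absurd h1 hyS)
        · intro ha; exact ⟨Or.inl ha, Or.inr ha⟩
      have hABsub : τ ∪ insert y S ⊆ σ := by
        apply Finset.union_subset hτσ
        exact Finset.insert_subset hyσ (hSsub.trans Finset.sdiff_subset)
      have hsm := h.submodular (h.down_closed hσ hA) (h.down_closed hσ hB)
        (by rw [hAB]; exact h.down_closed hσ hABsub)
      rw [hAB, hABi] at hsm
      have e1 : r (τ ∪ S) = r τ := ih hSsub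
      have e2 : r (insert y τ) = r τ := hall y hyin
      have e3 : r τ ≤ r (τ ∪ insert y S) :=
        h.rank_mono hτ (h.down_closed hσ hABsub) (Finset.subset_union_left)
      omega
  have := key (σ \ τ) (le_refl _)
  rw [Finset.union_sdiff_of_subset hτσ] at this
  omega

lemma exists_indep (h : IsSemimatroid (· ∈ Δ) r) {σ : Finset α} (hσ : σ ∈ Δ) :
    ∀ n, n ≤ r σ → ∃ τ, τ ⊆ σ ∧ r τ = n ∧ τ.card = n := by
  intro n
  induction n with
  | zero => intro _; exact ⟨∅, Finset.empty_subset _, rank_empty h, Finset.card_empty⟩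
  | succ n ih =>
    intro hn
    obtain ⟨τ, hτσ, hrτ, hcτ⟩ := ih (by omega)
    obtain ⟨y, hy, hry⟩ := exists_step h hσ hτσ (by omega)
    have hyτ : y ∉ τ := (Finset.mem_sdiff.mp hy).2
    refine ⟨insert y τ, Finset.insert_subset (Finset.mem_sdiff.mp hy).1 hτσ, by omega, ?_⟩
    rw [Finset.card_insert_of_notMem hyτ]; omega

lemma exists_basis (h : IsSemimatroid (· ∈ Δ) r) {τ : Finset α} (hτ : τ ∈ Δ)
    (hInd : r τ = τ.card) : ∃ B, IsSMBasis Δ r B ∧ τ ⊆ B := by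
  classical
  set F := Δ.filter (fun X => τ ⊆ X ∧ r X = X.card) with hF
  have hne : F.Nonempty := ⟨τ, by simp [hF, hτ, hInd]⟩
  obtain ⟨B, hBF, hmax⟩ := F.exists_max_image Finset.card hne
  rw [hF, Finset.mem_filter] at hBF
  obtain ⟨hBΔ, hτB, hBind⟩ := hBF
  refine ⟨B, ⟨hBΔ, hBind, ?_⟩, hτB⟩
  intro X hX hXind hBX
  have hXF : X ∈ F := by
    rw [hF, Finset.mem_filter]; exact ⟨hX, hτB.trans hBX, hXind⟩
  exact (Finset.eq_of_subset_of_card_le hBX (hmax X hXF)).symm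

end TCaux

/-- if `e` is a coloop of a semimatroid (an element of every basis, with
`{e} ∈ Δ`), then `T_𝒞(x,y) = x · T_{𝒞/e}(x,y)`, where the contraction `𝒞/e` has face
set `lk_e(Δ)` and rank `r'(σ) = r(σ∪{e}) − r({e})`. -/
theorem tutte_coloop {α : Type*} [DecidableEq α]
    (Δ : Finset (Finset α)) (r : Finset α → ℕ)
    (h : IsSemimatroid (· ∈ Δ) r)
    (e : α) (he : ({e} : Finset α) ∈ Δ)
    (hcoloop : ∀ B, IsSMBasis Δ r B → e ∈ B) :
    ∀ x y : ℝ,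
      tutte Δ r x y = x * tutte (lkC Δ e) (fun σ => r (insert e σ) - r {e}) x y := by
  classical
  -- a maximal-rank basis
  have hΔne : Δ.Nonempty := ⟨_, (TCaux.empty_mem h)⟩
  obtain ⟨σ0, hσ0, hσ0sup⟩ := Finset.exists_mem_eq_sup Δ hΔne r
  obtain ⟨τ0, hτ0σ, hrτ0, hcτ0⟩ := TCaux.exists_indep h hσ0 (r σ0) le_rfl
  obtain ⟨B, hB, hτ0B⟩ := TCaux.exists_basis h (h.down_closed hσ0 hτ0σ) (by omega)
  have heB : e ∈ B := hcoloop B hB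
  set rk := rkOf Δ r with hrkdef
  have hrB : r B = rk := by
    have h1 : r B ≤ rk := by rw [hrkdef, rkOf]; exact Finset.le_sup hB.1
    have h2 : r τ0 ≤ r B := h.rank_mono (h.down_closed hσ0 hτ0σ) hB.1 hτ0B
    have h3 : rk = r σ0 := by rw [hrkdef, rkOf, hσ0sup]
    omega
  -- r {e} = 1
  have hre : r {e} = 1 := by
    have := TCaux.indep_subset h hB.1 (Finset.singleton_subset_iff.mpr heB) hB.2.1
    simpa using this
  -- key coloop property
  have hF : ∀ σ ∈ Δ, e ∉ σ → insert e σ ∈ Δ ∧ r (insert e σ) = r σ + 1 := by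
    intro σ hσ heσ
    obtain ⟨τ, hτσ, hrτ, hcτ⟩ := TCaux.exists_indep h hσ (r σ) le_rfl
    obtain ⟨B', hB', hτB'⟩ := TCaux.exists_basis h (h.down_closed hσ hτσ) (by omega)
    have heB' : e ∈ B' := hcoloop B' hB'
    have hinsτB' : insert e τ ⊆ B' := Finset.insert_subset heB' hτB'
    have hinsτ : insert e τ ∈ Δ := h.down_closed hB'.1 hinsτB'
    have heτ : e ∉ τ := fun hh => heσ (hτσ hh)
    have hinter : σ ∩ insert e τ = τ := by
      ext a
      simp only [Finset.mem_inter, Finset.mem_insert]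
      constructor
      · rintro ⟨h1, h2 | h2⟩
        · subst h2; exact absurd h1 heσ
        · exact h2
      · intro ha; exact ⟨hτσ ha, Or.inr ha⟩
    have hunion : σ ∪ insert e τ = insert e σ := by
      ext a
      simp only [Finset.mem_union, Finset.mem_insert]
      constructor
      · rintro (h1 | h1 | h1) <;> first | (exact Or.inr h1) | (exact Or.inl h1) | (exact Or.inr (hτσ h1))
      · rintro (h1 | h1)
        · exact Or.inr (Or.inl h1)
        · exact Or.inl h1
    have hmem : insert e σ ∈ Δ := by
      have := h.union_mem hσ hinsτ (by rw [hinter]; omega)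
      rwa [hunion] at this
    refine ⟨hmem, ?_⟩
    have hup : r (insert e σ) ≤ r σ + 1 := TCaux.rank_insert_le h hσ hmem
    have hlo : r (insert e τ) = τ.card + 1 := by
      have := TCaux.indep_subset h hB'.1 hinsτB' hB'.2.1
      rw [Finset.card_insert_of_notMem heτ] at this
      exact this
    have hmono : r (insert e τ) ≤ r (insert e σ) :=
      h.rank_mono hinsτ hmem (Finset.insert_subset_insert _ hτσ)
    omega
  -- membership in the link
  have hL : ∀ τ : Finset α, τ ∈ lkC Δ e ↔ e ∉ τ ∧ insert e τ ∈ Δ := by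
    intro τ
    constructor
    · intro hτ
      rw [lkC, Finset.mem_image] at hτ
      obtain ⟨σ, hσ, rfl⟩ := hτ
      rw [Finset.mem_filter] at hσ
      constructor
      · exact Finset.notMem_erase _ _
      · rw [Finset.insert_erase hσ.2]; exact hσ.1
    · rintro ⟨h1, h2⟩
      rw [lkC, Finset.mem_image]
      exact ⟨insert e τ, Finset.mem_filter.mpr ⟨h2, Finset.mem_insert_self _ _⟩,
        Finset.erase_insert h1⟩
  set r' : Finset α → ℕ := fun σ => r (insert e σ) - r {e} with hr'def
  have hr' : ∀ τ ∈ lkC Δ e, r' τ = r τ := by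
    intro τ hτ
    obtain ⟨h1, h2⟩ := (hL τ).mp hτ
    have := (hF τ (h.down_closed h2 (Finset.subset_insert _ _)) h1).2
    simp only [hr'def, hre, this]
    omega
  have hrlast : ∀ τ ∈ lkC Δ e, r τ + 1 ≤ rk := by
    intro τ hτ
    obtain ⟨h1, h2⟩ := (hL τ).mp hτ
    have h3 := (hF τ (h.down_closed h2 (Finset.subset_insert _ _)) h1).2
    have h4 : r (insert e τ) ≤ rk := by rw [hrkdef, rkOf]; exact Finset.le_sup h2
    omega
  have hrk1 : 1 ≤ rk := by
    have h1 : (1 : ℕ) ≤ B.card := Finset.card_pos.mpr ⟨e, heB⟩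
    have h2 := hB.2.1
    omega
  -- rank of the link
  have hrkL : rkOf (lkC Δ e) r' = rk - 1 := by
    rw [rkOf]
    apply le_antisymm
    · apply Finset.sup_le
      intro τ hτ
      have := hrlast τ hτ
      rw [hr' τ hτ]
      omega
    · have hBe : B.erase e ∈ lkC Δ e := by
        rw [hL]
        refine ⟨Finset.notMem_erase _ _, ?_⟩
        rw [Finset.insert_erase heB]; exact hB.1
      have h1 : r' (B.erase e) = rk - 1 := by
        simp only [hr'def, Finset.insert_erase heB, hre, hrB]
      calc rk - 1 = r' (B.erase e) := h1.symm
        _ ≤ _ := Finset.le_sup hBe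
  intro x y
  -- split the Tutte sum
  have hsplit := Finset.sum_filter_add_sum_filter_not Δ (fun σ => e ∈ σ)
    (fun σ => (x - 1) ^ (rk - r σ) * (y - 1) ^ (σ.card - r σ))
  have hTdef : tutte Δ r x y =
      ∑ σ ∈ Δ.filter (fun σ => e ∈ σ), (x - 1) ^ (rk - r σ) * (y - 1) ^ (σ.card - r σ)
      + ∑ σ ∈ Δ.filter (fun σ => ¬ e ∈ σ), (x - 1) ^ (rk - r σ) * (y - 1) ^ (σ.card - r σ) := by
    rw [tutte, ← hrkdef, hsplit]
  set T' := tutte (lkC Δ e) r' x y with hT'def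
  -- first sum equals T'
  have hS1 : ∑ σ ∈ Δ.filter (fun σ => e ∈ σ), (x - 1) ^ (rk - r σ) * (y - 1) ^ (σ.card - r σ)
      = T' := by
    rw [hT'def, tutte, hrkL]
    rw [lkC, Finset.sum_image (by
      intro σ1 h1 σ2 h2 hee
      rw [Finset.mem_coe, Finset.mem_filter] at h1 h2
      rw [← Finset.insert_erase h1.2, show σ1.erase e = σ2.erase e from hee, Finset.insert_erase h2.2])]
    apply Finset.sum_congr rfl
    intro σ hσ
    rw [Finset.mem_filter] at hσ
    obtain ⟨hσΔ, heσ⟩ := hσ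
    have hτL : σ.erase e ∈ lkC Δ e := by
      rw [hL]
      exact ⟨Finset.notMem_erase _ _, by rw [Finset.insert_erase heσ]; exact hσΔ⟩
    have hr'τ : r' (σ.erase e) = r (σ.erase e) := hr' _ hτL
    have hrσ : r σ = r (σ.erase e) + 1 := by
      have := (hF (σ.erase e) (h.down_closed hσΔ (Finset.erase_subset _ _))
        (Finset.notMem_erase _ _)).2
      rw [Finset.insert_erase heσ] at this
      exact this
    have hcσ : σ.card = (σ.erase e).card + 1 := by
      rw [Finset.card_erase_of_mem heσ]
      have : 1 ≤ σ.card := Finset.card_pos.mpr ⟨e, heσ⟩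
      omega
    rw [hr'τ]
    congr 1
    · congr 1; omega
    · congr 1; omega
  -- second sum equals (x-1) * T'
  have hfilt : Δ.filter (fun σ => ¬ e ∈ σ) = lkC Δ e := by
    ext τ
    rw [Finset.mem_filter, hL]
    constructor
    · rintro ⟨h1, h2⟩; exact ⟨h2, (hF τ h1 h2).1⟩
    · rintro ⟨h1, h2⟩; exact ⟨h.down_closed h2 (Finset.subset_insert _ _), h1⟩
  have hS2 : ∑ σ ∈ Δ.filter (fun σ => ¬ e ∈ σ), (x - 1) ^ (rk - r σ) * (y - 1) ^ (σ.card - r σ)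
      = (x - 1) * T' := by
    rw [hfilt, hT'def, tutte, hrkL, Finset.mul_sum]
    apply Finset.sum_congr rfl
    intro τ hτ
    have h1 := hrlast τ hτ
    have h2 := hr' τ hτ
    have hexp : rk - r τ = (rk - 1 - r' τ) + 1 := by omega
    rw [hexp, pow_succ, h2]
    ring
  rw [hTdef, hS1, hS2]
  ring
end

section
/- Let Δ be a strong pseudo-independence complex over a matroid M with rank function r on ground set S. Then (S, Δ, r restricted to Δ) is a semimatroid. -/
/-- Let `Δ` be a strong pseudo-independence complex over a matroid with rank
function `r`. Then `(S, Δ, r|_Δ)` is a semimatroid. Here `r` satisfies the matroid rank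
axioms, `Δ` is a nonempty downward-closed complex; pseudo-independence means rank-increasing
extensions of faces are faces, and strongness means that any rank-preserving extension
element `x` of a face `σ` with `σ ∪ {x} ∈ Δ` is a cone point of `lk_σ(Δ)`. -/
theorem strong_pseudo_independence_is_semimatroid {α : Type*} [DecidableEq α]
    (Δ : Finset α → Prop) (r : Finset α → ℕ)
    -- `Δ` is a nonempty simplicial complex
    (hΔ : Δ ∅)
    (hdown : ∀ ⦃σ τ : Finset α⦄, Δ σ → τ ⊆ σ → Δ τ)
    -- `r` is the rank function of a matroid
    (h_le_card : ∀ σ : Finset α, r σ ≤ σ.card)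
    (h_mono : ∀ ⦃σ τ : Finset α⦄, σ ⊆ τ → r σ ≤ r τ)
    (h_submod : ∀ σ τ : Finset α, r (σ ∪ τ) + r (σ ∩ τ) ≤ r σ + r τ)
    (h_step : ∀ (σ : Finset α) (x : α), r (insert x σ) ≤ r σ + 1)
    -- `Δ` is a pseudo-independence complex over the matroid
    (hPI : ∀ ⦃σ : Finset α⦄ ⦃x : α⦄, Δ σ → x ∉ σ → r σ < r (insert x σ) → Δ (insert x σ))
    -- `Δ` is strong: such an `x` is a cone point of `lk_σ(Δ)`
    (hStrong : ∀ ⦃σ : Finset α⦄ ⦃x : α⦄, Δ σ → x ∉ σ → r (insert x σ) = r σ →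
      Δ (insert x σ) →
      ∀ τ : Finset α, τ ∩ σ = ∅ → Δ (τ ∪ σ) → x ∉ τ → Δ (insert x τ ∪ σ)) :
    IsSemimatroid Δ r := by
  constructor
  · exact ⟨∅, hΔ⟩
  · exact hdown
  · intro σ _; exact h_le_card σ
  · intro σ τ _ _ h; exact h_mono h
  · intro σ τ _ _ _; exact h_submod σ τ
  · -- union_mem
    intro σ τ hσ hτ hr
    have key : ∀ U : Finset α, U ⊆ σ \ τ → Δ (U ∪ τ) := by
      intro U
      induction U using Finset.induction_on with
      | empty => intro _; simpa using hτ
      | @insert x U hxU ih =>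
        intro hsub
        have hUsub : U ⊆ σ \ τ := (Finset.subset_insert x U).trans hsub
        have hx : x ∈ σ \ τ := hsub (Finset.mem_insert_self x U)
        have hxσ : x ∈ σ := (Finset.mem_sdiff.mp hx).1
        have hxτ : x ∉ τ := (Finset.mem_sdiff.mp hx).2
        have hUτ : Δ (U ∪ τ) := ih hUsub
        set B := σ ∩ τ with hB
        have hxB : x ∉ B := fun h => hxτ (Finset.mem_inter.mp h).2
        have hxBσ : insert x B ⊆ σ :=
          Finset.insert_subset hxσ Finset.inter_subset_left
        have hΔxB : Δ (insert x B) := hdown hσ hxBσ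
        have hrB : r (insert x B) = r B :=
          le_antisymm (le_trans (h_mono hxBσ) (le_of_eq hr))
            (h_mono (Finset.subset_insert x B))
        have hBsub : B ⊆ U ∪ τ :=
          Finset.inter_subset_right.trans Finset.subset_union_right
        have hτ' : ((U ∪ τ) \ B) ∩ B = ∅ := by
          simp [Finset.sdiff_inter_self]
        have hunion : (U ∪ τ) \ B ∪ B = U ∪ τ := Finset.sdiff_union_of_subset hBsub
        have hxτ' : x ∉ (U ∪ τ) \ B := by
          intro h
          rcases Finset.mem_union.mp (Finset.mem_sdiff.mp h).1 with h' | h'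
          · exact hxU h'
          · exact hxτ h'
        have := hStrong (hdown hσ Finset.inter_subset_left) hxB hrB hΔxB
          ((U ∪ τ) \ B) hτ' (by rw [hunion]; exact hUτ) hxτ'
        have heq : insert x ((U ∪ τ) \ B) ∪ B = insert x U ∪ τ := by
          rw [Finset.insert_union, hunion, ← Finset.insert_union]
        rwa [heq] at this
    have := key (σ \ τ) (subset_refl _)
    rwa [Finset.sdiff_union_self_eq_union] at this
  · -- exchange
    intro σ τ hσ hτ hrlt
    by_contra hcon
    push_neg at hcon
    have hflat : ∀ y ∈ τ \ σ, r (insert y σ) = r σ := by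
      intro y hy
      refine le_antisymm ?_ (h_mono (Finset.subset_insert y σ))
      by_contra h
      push_neg at h
      have hyσ : y ∉ σ := (Finset.mem_sdiff.mp hy).2
      exact hcon y hy (hPI hσ hyσ h)
    have hclose : ∀ T : Finset α, (∀ y ∈ T, r (insert y σ) = r σ) → r (σ ∪ T) ≤ r σ := by
      intro T
      induction T using Finset.induction_on with
      | empty => intro _; simp
      | @insert a T haT ih =>
        intro hT
        have hT' : ∀ y ∈ T, r (insert y σ) = r σ :=
          fun y hy => hT y (Finset.mem_insert_of_mem hy)
        have ha : r (insert a σ) = r σ := hT a (Finset.mem_insert_self a T)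
        have hsub := h_submod (σ ∪ T) (insert a σ)
        have h1 : (σ ∪ T) ∪ insert a σ = σ ∪ insert a T := by
          ext z; simp [Finset.mem_union, Finset.mem_insert]; tauto
        have h2 : σ ⊆ (σ ∪ T) ∩ insert a σ :=
          Finset.subset_inter Finset.subset_union_left (Finset.subset_insert a σ)
        have h3 := h_mono h2
        rw [h1] at hsub
        have h4 := ih hT'
        omega
    have h5 := hclose (τ \ σ) hflat
    rw [Finset.union_sdiff_self_eq_union] at h5
    have := h_mono (Finset.subset_union_right : τ ⊆ σ ∪ τ)
    omega
end

section
/- Let 𝒞 = (S, Δ, r) be a semimatroid and define r'(σ) = max{r(τ) : τ ⊆ σ, τ ∈ Δ} for σ ⊆ S. Then r' is the rank function of a matroid on S, and Δ is a strong pseudo-independence complex over this matroid. -/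
/-- The induced matroid rank function: `r'(σ) = max {r(τ) : τ ⊆ σ, τ ∈ Δ}`. -/
def inducedRank {α : Type*} [DecidableEq α] (Δ : Finset (Finset α)) (r : Finset α → ℕ)
    (σ : Finset α) : ℕ :=
  (σ.powerset.filter (· ∈ Δ)).sup r

section Aux
variable {α : Type*} [DecidableEq α] {Δ : Finset (Finset α)} {r : Finset α → ℕ}
  (h : IsSemimatroid (· ∈ Δ) r)
include h

lemma sm_empty_mem : ∅ ∈ Δ := by
  obtain ⟨σ, hσ⟩ := h.nonempty
  exact h.down_closed hσ (Finset.empty_subset _)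

omit h in
lemma sm_le_inducedRank {τ σ : Finset α} (hτ : τ ∈ Δ) (hsub : τ ⊆ σ) :
    r τ ≤ inducedRank Δ r σ :=
  Finset.le_sup (Finset.mem_filter.2 ⟨Finset.mem_powerset.2 hsub, hτ⟩)

lemma sm_exists_achieves (σ : Finset α) :
    ∃ τ, τ ∈ Δ ∧ τ ⊆ σ ∧ r τ = inducedRank Δ r σ := by
  have hne : (σ.powerset.filter (· ∈ Δ)).Nonempty :=
    ⟨∅, Finset.mem_filter.2 ⟨Finset.mem_powerset.2 (Finset.empty_subset _), sm_empty_mem h⟩⟩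
  obtain ⟨τ, hτ, hval⟩ := Finset.exists_mem_eq_sup _ hne r
  rw [Finset.mem_filter, Finset.mem_powerset] at hτ
  exact ⟨τ, hτ.2, hτ.1, hval.symm⟩

lemma sm_inducedRank_eq {σ : Finset α} (hσ : σ ∈ Δ) : inducedRank Δ r σ = r σ := by
  refine le_antisymm (Finset.sup_le fun τ hτ => ?_) (sm_le_inducedRank hσ subset_rfl)
  rw [Finset.mem_filter, Finset.mem_powerset] at hτ
  exact h.rank_mono hτ.2 hσ hτ.1

lemma sm_extend_aux (π : Finset α) (hπ : π ∈ Δ) :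
    ∀ n (μ : Finset α), (π \ μ).card ≤ n → μ ∈ Δ →
      ∃ ν, μ ⊆ ν ∧ ν ⊆ μ ∪ π ∧ ν ∈ Δ ∧ r π ≤ r ν := by
  intro n
  induction n with
  | zero =>
    intro μ hc hμ
    have hps : π ⊆ μ := by
      rw [Nat.le_zero, Finset.card_eq_zero, Finset.sdiff_eq_empty_iff_subset] at hc
      exact hc
    exact ⟨μ, subset_rfl, Finset.subset_union_left, hμ, h.rank_mono hπ hμ hps⟩
  | succ n ih =>
    intro μ hc hμ
    by_cases hr : r π ≤ r μ
    · exact ⟨μ, subset_rfl, Finset.subset_union_left, hμ, hr⟩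
    · obtain ⟨y, hy, hins⟩ := h.exchange hμ hπ (not_le.1 hr)
      rw [Finset.mem_sdiff] at hy
      have hc' : (π \ insert y μ).card ≤ n := by
        have heq : π \ insert y μ = (π \ μ).erase y := by
          ext z
          simp only [Finset.mem_sdiff, Finset.mem_erase, Finset.mem_insert]
          tauto
        rw [heq]
        have := Finset.card_erase_of_mem (Finset.mem_sdiff.2 hy)
        omega
      obtain ⟨ν, h1, h2, h3, h4⟩ := ih (insert y μ) hc' hins
      refine ⟨ν, (Finset.subset_insert _ _).trans h1, h2.trans ?_, h3, h4⟩
      intro z hz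
      rcases Finset.mem_union.1 hz with hz | hz
      · rcases Finset.mem_insert.1 hz with rfl | hz
        · exact Finset.mem_union_right _ hy.1
        · exact Finset.mem_union_left _ hz
      · exact Finset.mem_union_right _ hz

lemma sm_extend {μ s : Finset α} (hμ : μ ∈ Δ) (hμs : μ ⊆ s) :
    ∃ ν, ν ∈ Δ ∧ μ ⊆ ν ∧ ν ⊆ s ∧ r ν = inducedRank Δ r s := by
  obtain ⟨π, hπ, hπs, hπr⟩ := sm_exists_achieves h s
  obtain ⟨ν, h1, h2, h3, h4⟩ := sm_extend_aux h π hπ (π \ μ).card μ le_rfl hμ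
  have hνs : ν ⊆ s := h2.trans (Finset.union_subset hμs hπs)
  exact ⟨ν, h3, h1, hνs, le_antisymm (sm_le_inducedRank h3 hνs) (hπr ▸ h4)⟩

end Aux

/-- For a semimatroid `𝒞 = (S, Δ, r)`, the function
`r'(σ) = max {r(τ) : τ ⊆ σ, τ ∈ Δ}` is the rank function of a matroid on `S`, and `Δ` is a
strong pseudo-independence complex over this matroid. -/
theorem semimatroid_gives_strong_pseudo_independence {α : Type*} [DecidableEq α]
    (Δ : Finset (Finset α)) (r : Finset α → ℕ)
    (h : IsSemimatroid (· ∈ Δ) r) :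
    -- `r'` satisfies the matroid rank axioms
    (∀ σ : Finset α, inducedRank Δ r σ ≤ σ.card) ∧
    (∀ ⦃σ τ : Finset α⦄, σ ⊆ τ → inducedRank Δ r σ ≤ inducedRank Δ r τ) ∧
    (∀ σ τ : Finset α,
      inducedRank Δ r (σ ∪ τ) + inducedRank Δ r (σ ∩ τ) ≤
        inducedRank Δ r σ + inducedRank Δ r τ) ∧
    (∀ (σ : Finset α) (x : α), inducedRank Δ r (insert x σ) ≤ inducedRank Δ r σ + 1) ∧
    -- `Δ` is a pseudo-independence complex over this matroid
    (∀ ⦃σ : Finset α⦄ ⦃x : α⦄, σ ∈ Δ → x ∉ σ →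
      inducedRank Δ r σ < inducedRank Δ r (insert x σ) → insert x σ ∈ Δ) ∧
    -- `Δ` is strong over this matroid
    (∀ ⦃σ : Finset α⦄ ⦃x : α⦄, σ ∈ Δ → x ∉ σ →
      inducedRank Δ r (insert x σ) = inducedRank Δ r σ → insert x σ ∈ Δ →
      ∀ τ : Finset α, τ ∩ σ = ∅ → τ ∪ σ ∈ Δ → x ∉ τ → insert x τ ∪ σ ∈ Δ) := by
  refine ⟨?_, ?_, ?_, ?_, ?_, ?_⟩
  · -- rank ≤ card
    intro σ
    obtain ⟨τ, hτ, hsub, hval⟩ := sm_exists_achieves h σ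
    rw [← hval]
    exact (h.rank_le_card hτ).trans (Finset.card_le_card hsub)
  · -- monotone
    intro σ τ hst
    obtain ⟨ρ, hρ, hsub, hval⟩ := sm_exists_achieves h σ
    rw [← hval]
    exact sm_le_inducedRank hρ (hsub.trans hst)
  · -- submodular
    intro σ τ
    obtain ⟨μ, hμ, hμsub, hμval⟩ := sm_exists_achieves h (σ ∩ τ)
    obtain ⟨ν, hν, hμν, hνsub, hνval⟩ :=
      sm_extend h hμ (hμsub.trans Finset.inter_subset_union)
    have hA : ν ∩ σ ∈ Δ := h.down_closed hν Finset.inter_subset_left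
    have hB : ν ∩ τ ∈ Δ := h.down_closed hν Finset.inter_subset_left
    have hAB : (ν ∩ σ) ∪ (ν ∩ τ) = ν := by
      rw [← Finset.inter_union_distrib_left]
      exact Finset.inter_eq_left.2 hνsub
    have hU : (ν ∩ σ) ∪ (ν ∩ τ) ∈ Δ := by rw [hAB]; exact hν
    have hsm := h.submodular hA hB hU
    rw [hAB] at hsm
    have hmono : r μ ≤ r ((ν ∩ σ) ∩ (ν ∩ τ)) := by
      refine h.rank_mono hμ (h.down_closed hν ?_) ?_
      · exact Finset.inter_subset_left.trans Finset.inter_subset_left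
      · intro z hz
        have hz1 := hμν hz
        have hz2 := hμsub hz
        simp only [Finset.mem_inter] at hz2 ⊢
        exact ⟨⟨hz1, hz2.1⟩, hz1, hz2.2⟩
    have h1 : r (ν ∩ σ) ≤ inducedRank Δ r σ :=
      sm_le_inducedRank hA Finset.inter_subset_right
    have h2 : r (ν ∩ τ) ≤ inducedRank Δ r τ :=
      sm_le_inducedRank hB Finset.inter_subset_right
    rw [← hμval, ← hνval]
    omega
  · -- unit increase
    intro σ x
    obtain ⟨π, hπ, hsub, hval⟩ := sm_exists_achieves h (insert x σ)
    rw [← hval]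
    by_cases hx : x ∈ π
    · have hπ' : π.erase x ∈ Δ := h.down_closed hπ (Finset.erase_subset _ _)
      have hxs : ({x} : Finset α) ∈ Δ :=
        h.down_closed hπ (Finset.singleton_subset_iff.2 hx)
      have hun : π.erase x ∪ {x} = π := by
        rw [Finset.union_comm, ← Finset.insert_eq, Finset.insert_erase hx]
      have hUm : π.erase x ∪ {x} ∈ Δ := by rw [hun]; exact hπ
      have hsm := h.submodular hπ' hxs hUm
      rw [hun] at hsm
      have hx1 : r ({x} : Finset α) ≤ 1 := by
        simpa using h.rank_le_card hxs
      have hes : π.erase x ⊆ σ := by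
        intro z hz
        rw [Finset.mem_erase] at hz
        rcases Finset.mem_insert.1 (hsub hz.2) with rfl | hzs
        · exact absurd rfl hz.1
        · exact hzs
      have := sm_le_inducedRank (Δ := Δ) (r := r) hπ' hes
      omega
    · have : π ⊆ σ := fun z hz => by
        rcases Finset.mem_insert.1 (hsub hz) with rfl | hzs
        · exact absurd hz hx
        · exact hzs
      have := sm_le_inducedRank (Δ := Δ) (r := r) hπ this
      omega
  · -- pseudo-independence
    intro σ x hσ hx hlt
    obtain ⟨π, hπ, hsub, hval⟩ := sm_exists_achieves h (insert x σ)
    have hrσ : r σ < r π := by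
      have h1 := sm_inducedRank_eq h hσ
      omega
    obtain ⟨y, hy, hins⟩ := h.exchange hσ hπ hrσ
    rw [Finset.mem_sdiff] at hy
    rcases Finset.mem_insert.1 (hsub hy.1) with rfl | hys
    · exact hins
    · exact absurd hys hy.2
  · -- strong
    intro σ x hσ hx heq hins τ hτσ hτuσ hxτ
    have hrσ : r (insert x σ) = r σ := by
      rw [← sm_inducedRank_eq h hins, ← sm_inducedRank_eq h hσ]; exact heq
    have hinter : insert x σ ∩ (τ ∪ σ) = σ := by
      ext z
      simp only [Finset.mem_inter, Finset.mem_insert, Finset.mem_union]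
      constructor
      · rintro ⟨rfl | hzσ, hz2⟩
        · rcases hz2 with hz2 | hz2
          · exact absurd hz2 hxτ
          · exact absurd hz2 hx
        · exact hzσ
      · intro hz
        exact ⟨Or.inr hz, Or.inr hz⟩
    have hu : insert x σ ∪ (τ ∪ σ) ∈ Δ :=
      h.union_mem hins hτuσ (by rw [hinter, hrσ])
    have : insert x σ ∪ (τ ∪ σ) = insert x τ ∪ σ := by
      ext z
      simp only [Finset.mem_union, Finset.mem_insert]
      tauto
    rwa [this] at hu
end

section
/- Let 𝒞 = (S, Δ, r) be a semimatroid with linear order on S and s = max S a coloop with {s} ∈ Δ. Then s lies in no broken circuit, and the broken circuit complex satisfies BC(𝒞) = {ρ, ρ ∪ {s} : ρ ∈ BC(𝒞 − s)}, i.e., BC(𝒞) is the cone over BC(𝒞 − s) with apex s. -/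
/-- A circuit of a semimatroid: a dependent face all of whose proper subsets are
independent. -/
def IsCircuit {α : Type*} (Δ : Finset (Finset α)) (r : Finset α → ℕ) (C : Finset α) : Prop :=
  C ∈ Δ ∧ r C < C.card ∧ ∀ X : Finset α, X ⊂ C → r X = X.card

/-- `σ` contains a broken circuit, i.e. a set `C \ {min C}` for some circuit `C`. -/
def HasBrokenCircuit {α : Type*} [LinearOrder α] (Δ : Finset (Finset α)) (r : Finset α → ℕ)
    (σ : Finset α) : Prop :=
  ∃ C : Finset α, IsCircuit Δ r C ∧ ∃ h : C.Nonempty, C.erase (C.min' h) ⊆ σ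

/-- Membership in the broken circuit complex `BC(𝒞)`: a face containing no broken circuit. -/
def InBC {α : Type*} [LinearOrder α] (Δ : Finset (Finset α)) (r : Finset α → ℕ)
    (σ : Finset α) : Prop :=
  σ ∈ Δ ∧ ¬ HasBrokenCircuit Δ r σ

section Aux
variable {α : Type*} [LinearOrder α] {Δ : Finset (Finset α)} {r : Finset α → ℕ}

lemma sm_empty_mem_s15 (h : IsSemimatroid (· ∈ Δ) r) : ∅ ∈ Δ := by
  obtain ⟨σ, hσ⟩ := h.nonempty
  exact h.down_closed hσ (Finset.empty_subset _)

lemma sm_rank_empty (h : IsSemimatroid (· ∈ Δ) r) : r ∅ = 0 :=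
  Nat.le_zero.mp (by simpa using h.rank_le_card (sm_empty_mem_s15 h))

lemma sm_subset_indep (h : IsSemimatroid (· ∈ Δ) r) {X B : Finset α}
    (hB : B ∈ Δ) (hrB : r B = B.card) (hXB : X ⊆ B) : r X = X.card := by
  have hXΔ : X ∈ Δ := h.down_closed hB hXB
  have hYΔ : B \ X ∈ Δ := h.down_closed hB (Finset.sdiff_subset)
  have hU : X ∪ (B \ X) = B := Finset.union_sdiff_of_subset hXB
  have hI : X ∩ (B \ X) = ∅ := by
    ext a; simp (config := { contextual := true }) [Finset.mem_inter, Finset.mem_sdiff]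
  have hsub := h.submodular hXΔ hYΔ (by rw [hU]; exact hB)
  rw [hU, hI, sm_rank_empty h] at hsub
  have h1 : r X ≤ X.card := h.rank_le_card hXΔ
  have h2 : r (B \ X) ≤ (B \ X).card := h.rank_le_card hYΔ
  have h3 : (B \ X).card = B.card - X.card := Finset.card_sdiff_of_subset hXB
  have h4 : X.card ≤ B.card := Finset.card_le_card hXB
  omega

lemma sm_exists_basis_superset (h : IsSemimatroid (· ∈ Δ) r) {σ : Finset α}
    (hσ : σ ∈ Δ) (hr : r σ = σ.card) : ∃ B, IsSMBasis Δ r B ∧ σ ⊆ B := by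
  classical
  set T := Δ.filter (fun X => r X = X.card ∧ σ ⊆ X) with hT
  have hσT : σ ∈ T := by simp [hT, hσ, hr]
  obtain ⟨B, hBT, hBmax⟩ := T.exists_max_image Finset.card ⟨σ, hσT⟩
  rw [hT, Finset.mem_filter] at hBT
  refine ⟨B, ⟨hBT.1, hBT.2.1, ?_⟩, hBT.2.2⟩
  intro X hXΔ hXr hBX
  have hXT : X ∈ T := by
    rw [hT, Finset.mem_filter]; exact ⟨hXΔ, hXr, hBT.2.2.trans hBX⟩
  exact (Finset.eq_of_subset_of_card_le hBX (hBmax X hXT)).symm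

lemma sm_coloop_notin_circuit (h : IsSemimatroid (· ∈ Δ) r) {s : α}
    (hcoloop : ∀ B, IsSMBasis Δ r B → s ∈ B) {C : Finset α}
    (hC : IsCircuit Δ r C) : s ∉ C := by
  intro hs
  have h1 : C.erase s ⊂ C := Finset.erase_ssubset hs
  have hind : r (C.erase s) = (C.erase s).card := hC.2.2 _ h1
  have hCe : C.erase s ∈ Δ := h.down_closed hC.1 (Finset.erase_subset _ _)
  obtain ⟨B, hB, hsub⟩ := sm_exists_basis_superset h hCe hind
  have hsB := hcoloop B hB
  have hCB : C ⊆ B := by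
    intro x hx
    by_cases hxs : x = s
    · exact hxs ▸ hsB
    · exact hsub (Finset.mem_erase.mpr ⟨hxs, hx⟩)
  have := sm_subset_indep h hB.1 hB.2.1 hCB
  have := hC.2.1
  omega

lemma sm_exists_circuit (h : IsSemimatroid (· ∈ Δ) r) {ρ : Finset α}
    (hρ : ρ ∈ Δ) (hdep : r ρ < ρ.card) : ∃ C, C ⊆ ρ ∧ IsCircuit Δ r C := by
  classical
  set T := ρ.powerset.filter (fun X => r X < X.card) with hT
  have hρT : ρ ∈ T := by simp [hT, hdep]
  obtain ⟨C, hCT, hCmin⟩ := T.exists_min_image Finset.card ⟨ρ, hρT⟩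
  rw [hT, Finset.mem_filter, Finset.mem_powerset] at hCT
  refine ⟨C, hCT.1, h.down_closed hρ hCT.1, hCT.2, ?_⟩
  intro X hX
  have hXΔ : X ∈ Δ := h.down_closed hρ (hX.subset.trans hCT.1)
  have h1 : r X ≤ X.card := h.rank_le_card hXΔ
  by_contra hne
  have hXT : X ∈ T := by
    rw [hT, Finset.mem_filter, Finset.mem_powerset]
    exact ⟨hX.subset.trans hCT.1, by omega⟩
  have := hCmin X hXT
  have := Finset.card_lt_card hX
  omega

lemma sm_circuit_delC_iff (h : IsSemimatroid (· ∈ Δ) r) {s : α}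
    (hcoloop : ∀ B, IsSMBasis Δ r B → s ∈ B) (C : Finset α) :
    IsCircuit (delC Δ s) r C ↔ IsCircuit Δ r C := by
  constructor
  · rintro ⟨hC, h2, h3⟩
    exact ⟨(Finset.mem_filter.mp hC).1, h2, h3⟩
  · rintro ⟨hC, h2, h3⟩
    refine ⟨Finset.mem_filter.mpr ⟨hC, ?_⟩, h2, h3⟩
    exact sm_coloop_notin_circuit h hcoloop ⟨hC, h2, h3⟩

end Aux

/-- Let `s = max S` be a coloop of the semimatroid with `{s} ∈ Δ`. Then `s`
lies in no broken circuit, and `BC(𝒞)` is the cone over `BC(𝒞 − s)` with apex `s`: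
`BC(𝒞) = {ρ, ρ ∪ {s} : ρ ∈ BC(𝒞 − s)}`. -/
theorem brokenCircuit_coloop_cone {α : Type*} [LinearOrder α]
    (Δ : Finset (Finset α)) (r : Finset α → ℕ)
    (h : IsSemimatroid (· ∈ Δ) r)
    (s : α) (hmax : ∀ a : α, a ≤ s)
    (hsΔ : ({s} : Finset α) ∈ Δ)
    (hcoloop : ∀ B, IsSMBasis Δ r B → s ∈ B) :
    (∀ C : Finset α, IsCircuit Δ r C → ∀ hC : C.Nonempty, s ∉ C.erase (C.min' hC)) ∧
    (∀ σ : Finset α,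
      InBC Δ r σ ↔ ∃ ρ : Finset α, InBC (delC Δ s) r ρ ∧ (σ = ρ ∨ σ = insert s ρ)) := by
  classical
  have hnotin : ∀ C : Finset α, IsCircuit Δ r C → s ∉ C :=
    fun C hC => sm_coloop_notin_circuit h hcoloop hC
  have hbc_iff : ∀ ρ : Finset α, HasBrokenCircuit (delC Δ s) r ρ ↔ HasBrokenCircuit Δ r ρ := by
    intro ρ
    unfold HasBrokenCircuit
    constructor
    · rintro ⟨C, hC, hne, hsub⟩
      exact ⟨C, (sm_circuit_delC_iff h hcoloop C).mp hC, hne, hsub⟩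
    · rintro ⟨C, hC, hne, hsub⟩
      exact ⟨C, (sm_circuit_delC_iff h hcoloop C).mpr hC, hne, hsub⟩
  constructor
  · intro C hC hCne hs
    exact hnotin C hC (Finset.mem_of_mem_erase hs)
  · intro σ
    constructor
    · rintro ⟨hσΔ, hσbc⟩
      refine ⟨σ.erase s, ⟨?_, ?_⟩, ?_⟩
      · exact Finset.mem_filter.mpr ⟨h.down_closed hσΔ (Finset.erase_subset _ _),
          Finset.notMem_erase _ _⟩
      · rw [hbc_iff]
        intro ⟨C, hC, hne, hsub⟩
        exact hσbc ⟨C, hC, hne, hsub.trans (Finset.erase_subset _ _)⟩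
      · by_cases hs : s ∈ σ
        · exact Or.inr (Finset.insert_erase hs).symm
        · exact Or.inl (Finset.erase_eq_of_notMem hs).symm
    · rintro ⟨ρ, ⟨hρdel, hρbc⟩, hcase⟩
      obtain ⟨hρΔ, hsρ⟩ := Finset.mem_filter.mp hρdel
      rw [hbc_iff] at hρbc
      have hρind : r ρ = ρ.card := by
        by_contra hne
        have hdep : r ρ < ρ.card := lt_of_le_of_ne (h.rank_le_card hρΔ) hne
        obtain ⟨C, hCρ, hC⟩ := sm_exists_circuit h hρΔ hdep
        have hCne : C.Nonempty := by
          rw [← Finset.card_pos]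
          have := hC.2.1; omega
        exact hρbc ⟨C, hC, hCne, (Finset.erase_subset _ _).trans hCρ⟩
      rcases hcase with rfl | rfl
      · exact ⟨hρΔ, hρbc⟩
      · obtain ⟨B, hB, hsub⟩ := sm_exists_basis_superset h hρΔ hρind
        have hsB := hcoloop B hB
        have hinB : insert s ρ ⊆ B := Finset.insert_subset hsB hsub
        refine ⟨h.down_closed hB.1 hinB, ?_⟩
        rintro ⟨C, hC, hne, hsub2⟩
        refine hρbc ⟨C, hC, hne, ?_⟩
        intro x hx
        have hxs : x ≠ s := fun he => hnotin C hC (Finset.mem_of_mem_erase (he ▸ hx))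
        rcases Finset.mem_insert.mp (hsub2 hx) with h1 | h1
        · exact absurd h1 hxs
        · exact h1
end

section
/- Let 𝒞 = (S, Δ, r) be a semimatroid with linear order on S and s = max S, where s is not a loop nor a coloop and {s} ∈ Δ. Then del_s(BC(𝒞)) = BC(𝒞 − s) and lk_s(BC(𝒞)) = BC(𝒞/s). -/
lemma exists_circuit_aux {α : Type*} [DecidableEq α] (Δ' : Finset (Finset α))
    (r' : Finset α → ℕ)
    (dc : ∀ ⦃σ τ : Finset α⦄, σ ∈ Δ' → τ ⊆ σ → τ ∈ Δ')
    (rc : ∀ ⦃σ⦄, σ ∈ Δ' → r' σ ≤ σ.card) :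
    ∀ D : Finset α, D ∈ Δ' → r' D < D.card → ∃ C, C ⊆ D ∧ IsCircuit Δ' r' C := by
  intro D
  induction D using Finset.strongInductionOn with
  | _ D ih =>
    intro hD hdep
    by_cases hall : ∀ X : Finset α, X ⊂ D → r' X = X.card
    · exact ⟨D, subset_rfl, hD, hdep, hall⟩
    · push_neg at hall
      obtain ⟨X, hXD, hne⟩ := hall
      obtain ⟨C, hCX, hC⟩ := ih X hXD (dc hD hXD.subset)
        (lt_of_le_of_ne (rc (dc hD hXD.subset)) hne)
      exact ⟨C, hCX.trans hXD.subset, hC⟩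

/-- Let `s = max S`, with `{s} ∈ Δ`, `s` neither a loop nor a coloop. Then
`del_s(BC(𝒞)) = BC(𝒞 − s)` and `lk_s(BC(𝒞)) = BC(𝒞/s)`, where the contraction `𝒞/s` has
face set `lk_s(Δ)` and rank `r'(σ) = r(σ∪{s}) − r({s})`. -/
theorem brokenCircuit_del_lk {α : Type*} [LinearOrder α]
    (Δ : Finset (Finset α)) (r : Finset α → ℕ)
    (h : IsSemimatroid (· ∈ Δ) r)
    (s : α) (hmax : ∀ a : α, a ≤ s)
    (hsΔ : ({s} : Finset α) ∈ Δ)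
    (hnotloop : r {s} ≠ 0)
    (hnotcoloop : ∃ B, IsSMBasis Δ r B ∧ s ∉ B) :
    (∀ σ : Finset α, (InBC Δ r σ ∧ s ∉ σ) ↔ InBC (delC Δ s) r σ) ∧
    (∀ σ : Finset α,
      (s ∉ σ ∧ InBC Δ r (insert s σ)) ↔
        InBC (lkC Δ s) (fun τ => r (insert s τ) - r {s}) σ) := by
  classical
  set r' : Finset α → ℕ := fun τ => r (insert s τ) - r {s} with hr'def
  have hDempty : (∅ : Finset α) ∈ Δ := by
    obtain ⟨σ, hσ⟩ := h.nonempty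
    exact h.down_closed hσ (Finset.empty_subset σ)
  have hrempty : r ∅ = 0 := Nat.le_zero.mp (by simpa using h.rank_le_card hDempty)
  have hrs : r {s} = 1 := by
    have := h.rank_le_card hsΔ
    simp at this
    omega
  -- circuits of Δ are nonempty
  have circ_ne : ∀ C : Finset α, IsCircuit Δ r C → C.Nonempty := by
    intro C hC
    rcases Finset.eq_empty_or_nonempty C with rfl | hne
    · exact absurd hC.2.1 (by simp [hrempty])
    · exact hne
  -- circuit rank
  have circ_rank : ∀ C : Finset α, IsCircuit Δ r C → r C + 1 = C.card := by
    intro C hC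
    obtain ⟨x, hx⟩ := circ_ne C hC
    have hsub : C.erase x ⊂ C := Finset.erase_ssubset hx
    have h1 : r (C.erase x) = (C.erase x).card := hC.2.2 _ hsub
    have h2 : (C.erase x).card = C.card - 1 := Finset.card_erase_of_mem hx
    have h3 : r (C.erase x) ≤ r C :=
      h.rank_mono (h.down_closed hC.1 (Finset.erase_subset _ _)) hC.1 (Finset.erase_subset _ _)
    have h4 : r C < C.card := hC.2.1
    have h5 : 1 ≤ C.card := Finset.card_pos.mpr ⟨x, hx⟩
    omega
  -- a circuit containing s is not {s} and has another element
  have circ_other : ∀ C : Finset α, IsCircuit Δ r C → s ∈ C → ∃ t ∈ C, t ≠ s := by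
    intro C hC hsC
    by_contra hcon
    push_neg at hcon
    have : C = {s} := Finset.eq_singleton_iff_unique_mem.mpr ⟨hsC, hcon⟩
    rw [this] at hC
    have := hC.2.1
    simp [hrs] at this
  -- min of a circuit containing s is not s
  have circ_min_ne : ∀ C : Finset α, IsCircuit Δ r C → (hne : C.Nonempty) → C.min' hne ≠ s := by
    intro C hC hne he
    have hsC : s ∈ C := he ▸ Finset.min'_mem C hne
    obtain ⟨t, htC, hts⟩ := circ_other C hC hsC
    have h1 : C.min' hne ≤ t := Finset.min'_le _ _ htC
    rw [he] at h1
    exact hts (le_antisymm (hmax t) h1)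
  -- lkC membership
  have mem_lk : ∀ σ : Finset α, σ ∈ lkC Δ s ↔ s ∉ σ ∧ insert s σ ∈ Δ := by
    intro σ
    simp only [lkC, Finset.mem_image, Finset.mem_filter]
    constructor
    · rintro ⟨τ, ⟨hτ, hsτ⟩, rfl⟩
      exact ⟨Finset.notMem_erase _ _, by rwa [Finset.insert_erase hsτ]⟩
    · rintro ⟨hsσ, hσ⟩
      exact ⟨insert s σ, ⟨hσ, Finset.mem_insert_self _ _⟩, Finset.erase_insert hsσ⟩
  have lk_dc : ∀ ⦃σ τ : Finset α⦄, σ ∈ lkC Δ s → τ ⊆ σ → τ ∈ lkC Δ s := by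
    intro σ τ hσ hτσ
    rw [mem_lk] at *
    exact ⟨fun hsτ => hσ.1 (hτσ hsτ),
      h.down_closed hσ.2 (Finset.insert_subset_insert s hτσ)⟩
  have r_insert_ge1 : ∀ X : Finset α, insert s X ∈ Δ → 1 ≤ r (insert s X) := by
    intro X hX
    have := h.rank_mono hsΔ hX (by simp)
    omega
  have lk_rc : ∀ ⦃σ⦄, σ ∈ lkC Δ s → r' σ ≤ σ.card := by
    intro σ hσ
    rw [mem_lk] at hσ
    have h1 := h.rank_le_card hσ.2
    have h2 : (insert s σ).card = σ.card + 1 := Finset.card_insert_of_notMem hσ.1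
    simp only [hr'def, hrs]
    omega
  have r_insert_le : ∀ X : Finset α, X ∈ Δ → s ∉ X → insert s X ∈ Δ →
      r (insert s X) ≤ r X + 1 := by
    intro X hX hsX hins
    have hu : ({s} : Finset α) ∪ X = insert s X := by
      rw [Finset.insert_eq]
    have hi : ({s} : Finset α) ∩ X = ∅ := Finset.singleton_inter_of_notMem hsX
    have := h.submodular hsΔ hX (show ({s} : Finset α) ∪ X ∈ Δ by rwa [hu])
    rw [hu, hi, hrempty, hrs] at this
    omega
  constructor
  · -- deletion part
    intro σ
    constructor
    · rintro ⟨⟨hσΔ, hnb⟩, hsσ⟩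
      refine ⟨Finset.mem_filter.mpr ⟨hσΔ, hsσ⟩, ?_⟩
      rintro ⟨C, ⟨hCmem, hCr, hCsub⟩, hne, hBC⟩
      exact hnb ⟨C, ⟨(Finset.mem_filter.mp hCmem).1, hCr, hCsub⟩, hne, hBC⟩
    · rintro ⟨hσ, hnb⟩
      obtain ⟨hσΔ, hsσ⟩ := Finset.mem_filter.mp hσ
      refine ⟨⟨hσΔ, ?_⟩, hsσ⟩
      rintro ⟨C, hC, hne, hBC⟩
      have hsC : s ∉ C := by
        intro hsC
        have hmin := circ_min_ne C hC hne
        have : s ∈ C.erase (C.min' hne) := Finset.mem_erase.mpr ⟨Ne.symm hmin, hsC⟩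
        exact hsσ (hBC this)
      exact hnb ⟨C, ⟨Finset.mem_filter.mpr ⟨hC.1, hsC⟩, hC.2.1, hC.2.2⟩, hne, hBC⟩
  · -- link part
    intro σ
    constructor
    · rintro ⟨hsσ, hmem, hnb⟩
      refine ⟨(mem_lk σ).mpr ⟨hsσ, hmem⟩, ?_⟩
      rintro ⟨C', hC', hne', hBC'⟩
      obtain ⟨hsC', hinsC'⟩ := (mem_lk C').mp hC'.1
      -- insert s C' is dependent in Δ
      have hdep : r (insert s C') < (insert s C').card := by
        have h1 := r_insert_ge1 C' hinsC'
        have h2 : r' C' < C'.card := hC'.2.1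
        simp only [hr'def, hrs] at h2
        have h3 : (insert s C').card = C'.card + 1 := Finset.card_insert_of_notMem hsC'
        omega
      obtain ⟨C, hCsub, hC⟩ := exists_circuit_aux Δ r
        (fun _ _ hσ hτ => h.down_closed hσ hτ) (fun _ hσ => h.rank_le_card hσ)
        (insert s C') hinsC' hdep
      have hneC : C.Nonempty := circ_ne C hC
      apply hnb
      refine ⟨C, hC, hneC, ?_⟩
      intro x hx
      obtain ⟨hxm, hxC⟩ := Finset.mem_erase.mp hx
      rcases Finset.mem_insert.mp (hCsub hxC) with rfl | hxC'
      · exact Finset.mem_insert_self _ _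
      · by_cases hxmin : x = C'.min' hne'
        · exfalso
          -- then min C ∈ C' and min C' ≤ min C ≤ x = min C', so x = min C, contradiction
          have hmC : C.min' hneC ∈ C := Finset.min'_mem _ _
          have hmne : C.min' hneC ≠ s := circ_min_ne C hC hneC
          have hmC' : C.min' hneC ∈ C' := by
            rcases Finset.mem_insert.mp (hCsub hmC) with he | he
            · exact absurd he hmne
            · exact he
          have h1 : C'.min' hne' ≤ C.min' hneC := Finset.min'_le _ _ hmC'
          have h2 : C.min' hneC ≤ x := Finset.min'_le _ _ hxC
          rw [hxmin] at h2 hxm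
          exact hxm (le_antisymm h2 h1).symm
        · exact Finset.mem_insert_of_mem (hBC' (Finset.mem_erase.mpr ⟨hxmin, hxC'⟩))
    · rintro ⟨hσlk, hnb'⟩
      obtain ⟨hsσ, hins⟩ := (mem_lk σ).mp hσlk
      refine ⟨hsσ, hins, ?_⟩
      rintro ⟨C, hC, hne, hBC⟩
      set m := C.min' hne with hmdef
      -- key step: a dependent lk-face contained in C whose non-m elements lie in σ
      -- gives a broken circuit of the link inside σ
      have key : ∀ D : Finset α, D ∈ lkC Δ s → r' D < D.card → D ⊆ C →
          (∀ x ∈ D, x ≠ m → x ∈ σ) → False := by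
        intro D hDlk hdep hDC hDσ
        obtain ⟨C'', hC''D, hC''⟩ := exists_circuit_aux (lkC Δ s) r' lk_dc lk_rc D hDlk hdep
        have hne'' : C''.Nonempty := by
          rcases Finset.eq_empty_or_nonempty C'' with rfl | hne''
          · exact absurd hC''.2.1 (by simp [hr'def, hrs])
          · exact hne''
        apply hnb'
        refine ⟨C'', hC'', hne'', ?_⟩
        intro x hx
        obtain ⟨hxm'', hxC''⟩ := Finset.mem_erase.mp hx
        refine hDσ x (hC''D hxC'') ?_
        rintro rfl
        -- m ∈ C'' and m is ≤ everything in C'' ⊆ C, so min C'' = m, contradiction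
        apply hxm''
        refine le_antisymm ?_ (Finset.min'_le _ _ hxC'')
        apply Finset.le_min'
        intro y hy
        exact Finset.min'_le _ _ (hDC (hC''D hy))
      by_cases hsC : s ∈ C
      · -- D := C.erase s
        have hDlk : C.erase s ∈ lkC Δ s := by
          rw [mem_lk]
          refine ⟨Finset.notMem_erase _ _, ?_⟩
          rw [Finset.insert_erase hsC]; exact hC.1
        obtain ⟨t, htC, hts⟩ := circ_other C hC hsC
        have hcard2 : 2 ≤ C.card := Finset.one_lt_card.mpr ⟨s, hsC, t, htC, (Ne.symm hts)⟩
        have hdep : r' (C.erase s) < (C.erase s).card := by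
          have h1 : insert s (C.erase s) = C := Finset.insert_erase hsC
          have h2 := circ_rank C hC
          have h3 : (C.erase s).card = C.card - 1 := Finset.card_erase_of_mem hsC
          simp only [hr'def, h1, hrs]
          omega
        refine key (C.erase s) hDlk hdep (Finset.erase_subset _ _) ?_
        intro x hx hxm
        obtain ⟨hxs, hxC⟩ := Finset.mem_erase.mp hx
        have : x ∈ insert s σ := hBC (Finset.mem_erase.mpr ⟨hxm, hxC⟩)
        exact (Finset.mem_insert.mp this).resolve_left hxs
      · -- s ∉ C; B := C.erase m
        set B := C.erase m with hBdef
        have hsB : s ∉ B := fun hx => hsC (Finset.mem_of_mem_erase hx)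
        have hBσ : B ⊆ σ := by
          intro x hx
          have : x ∈ insert s σ := hBC hx
          exact (Finset.mem_insert.mp this).resolve_left
            (fun he => hsB (he ▸ hx))
        have hinsB : insert s B ∈ Δ :=
          h.down_closed hins (Finset.insert_subset_insert s hBσ)
        have hBlk : B ∈ lkC Δ s := (mem_lk B).mpr ⟨hsB, hinsB⟩
        by_cases hrB : r (insert s B) ≤ B.card
        · have hdep : r' B < B.card := by
            have h1 := r_insert_ge1 B hinsB
            simp only [hr'def, hrs]
            omega
          exact key B hBlk hdep (Finset.erase_subset _ _)
            (fun x hx _ => hBσ hx)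
        · push_neg at hrB
          have hmC : m ∈ C := Finset.min'_mem _ _
          have hrBcard : r B = B.card := hC.2.2 B (Finset.erase_ssubset hmC)
          have hint : C ∩ insert s B = B := by
            ext x
            simp only [Finset.mem_inter, Finset.mem_insert]
            constructor
            · rintro ⟨hxC, rfl | hxB⟩
              · exact absurd hxC hsC
              · exact hxB
            · intro hxB
              exact ⟨Finset.mem_of_mem_erase hxB, Or.inr hxB⟩
          have hrC : r C = r B := by
            have h1 := circ_rank C hC
            have h2 : B.card = C.card - 1 := Finset.card_erase_of_mem hmC
            have h3 : 1 ≤ C.card := Finset.card_pos.mpr hne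
            omega
          have hunion : C ∪ insert s B ∈ Δ :=
            h.union_mem hC.1 hinsB (by rw [hint, hrC])
          have hCs : insert s C ∈ Δ := by
            have he : C ∪ insert s B = insert s C := by
              rw [Finset.union_insert, Finset.union_eq_left.mpr (Finset.erase_subset _ _)]
            rwa [he] at hunion
          have hCle := r_insert_le C hC.1 hsC hCs
          have hdep : r' C < C.card := by
            have h1 := circ_rank C hC
            simp only [hr'def, hrs]
            omega
          refine key C ((mem_lk C).mpr ⟨hsC, hCs⟩) hdep subset_rfl ?_
          intro x hx hxm
          exact hBσ (Finset.mem_erase.mpr ⟨hxm, hx⟩)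
end

section
/- For a semimatroid 𝒞 with linear order on S, the face-count generating polynomial of the broken circuit complex satisfies Σ_{σ ∈ BC(𝒞)} q^{|σ|} = q^{r_𝒞} T_𝒞((q+1)/q, 0), where r_𝒞 is the rank of 𝒞. -/
open Classical in
/-- The broken circuit complex of a semimatroid, as a finite set of faces. -/
noncomputable def bcFinset {α : Type*} [LinearOrder α] (Δ : Finset (Finset α))
    (r : Finset α → ℕ) : Finset (Finset α) :=
  Δ.filter (fun σ => ¬ HasBrokenCircuit Δ r σ)


set_option linter.unusedSectionVars false

section Aux
variable {α : Type*} [LinearOrder α] {Δ : Finset (Finset α)} {r : Finset α → ℕ}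

/-- Elements strictly above `e` in `A`. -/
def Bf (A : Finset α) (e : α) : Finset α := A.filter (fun x => e < x)

open Classical in
/-- The set of "active" elements of a face `A`. -/
noncomputable def Tset (Δ : Finset (Finset α)) (r : Finset α → ℕ) (A : Finset α) : Finset α :=
  (Δ.sup id).filter
    (fun e => insert e (Bf A e) ∈ Δ ∧ r (insert e (Bf A e)) = r (Bf A e))

lemma mem_Tset {A : Finset α} {e : α} :
    e ∈ Tset Δ r A ↔ insert e (Bf A e) ∈ Δ ∧ r (insert e (Bf A e)) = r (Bf A e) := by
  classical
  constructor
  · intro he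
    exact (Finset.mem_filter.1 he).2
  · intro h2
    refine Finset.mem_filter.2 ⟨?_, h2⟩
    have hle : insert e (Bf A e) ≤ Δ.sup id := Finset.le_sup (f := id) h2.1
    exact hle (Finset.mem_insert_self _ _)

lemma Bf_subset (A : Finset α) (e : α) : Bf A e ⊆ A := Finset.filter_subset _ _

lemma not_mem_Bf (A : Finset α) (e : α) : e ∉ Bf A e := by
  simp [Bf]

lemma Bf_insert_self (A : Finset α) (e : α) : Bf (insert e A) e = Bf A e := by
  rw [Bf, Finset.filter_insert, if_neg (lt_irrefl e)]; rfl

lemma Bf_erase_self (A : Finset α) (e : α) : Bf (A.erase e) e = Bf A e := by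
  ext x
  simp only [Bf, Finset.mem_filter, Finset.mem_erase]
  constructor
  · rintro ⟨⟨_, hxA⟩, hlt⟩; exact ⟨hxA, hlt⟩
  · rintro ⟨hxA, hlt⟩; exact ⟨⟨ne_of_gt hlt, hxA⟩, hlt⟩

lemma Bf_insert_of_lt {f e : α} (A : Finset α) (hfe : f < e) :
    Bf (insert e A) f = insert e (Bf A f) := by
  rw [Bf, Finset.filter_insert, if_pos hfe]; rfl

lemma Bf_erase_of_lt {f e : α} (A : Finset α) :
    Bf (A.erase e) f = (Bf A f).erase e := by
  ext x
  simp only [Bf, Finset.mem_filter, Finset.mem_erase]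
  tauto

lemma rank_insert_le (h : IsSemimatroid (· ∈ Δ) r) {σ : Finset α} {x : α}
    (hσ : σ ∈ Δ) (hx : insert x σ ∈ Δ) : r (insert x σ) ≤ r σ + 1 := by
  have hxx : ({x} : Finset α) ∈ Δ := h.down_closed hx (by simp)
  have hu : σ ∪ {x} ∈ Δ := by
    rwa [Finset.union_comm, ← Finset.insert_eq]
  have hsub := h.submodular hσ hxx hu
  have h1 : r ({x} : Finset α) ≤ 1 := by simpa using h.rank_le_card hxx
  have h2 : r (σ ∪ {x}) ≤ r σ + 1 := by omega
  rwa [Finset.union_comm, ← Finset.insert_eq] at h2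

lemma rank_le_add (h : IsSemimatroid (· ∈ Δ) r) :
    ∀ n : ℕ, ∀ {σ τ : Finset α}, τ ∈ Δ → σ ⊆ τ → τ.card ≤ σ.card + n → r τ ≤ r σ + n := by
  intro n
  induction n with
  | zero =>
    intro σ τ hτ hsub hc
    have : σ = τ := Finset.eq_of_subset_of_card_le hsub (by omega)
    subst this; omega
  | succ n ih =>
    intro σ τ hτ hsub hc
    by_cases heq : σ = τ
    · subst heq; omega
    · obtain ⟨x, hxτ, hxσ⟩ := Finset.exists_of_ssubset (ssubset_of_subset_of_ne hsub heq)
      have hins : insert x σ ⊆ τ := Finset.insert_subset hxτ hsub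
      have h1 : r τ ≤ r (insert x σ) + n := by
        refine ih hτ hins ?_
        rw [Finset.card_insert_of_notMem hxσ]; omega
      have h2 : r (insert x σ) ≤ r σ + 1 :=
        rank_insert_le h (h.down_closed hτ hsub) (h.down_closed hτ hins)
      omega

lemma indep_subset (h : IsSemimatroid (· ∈ Δ) r) {A X : Finset α}
    (hA : A ∈ Δ) (hr : r A = A.card) (hX : X ⊆ A) : r X = X.card := by
  have h1 : r X ≤ X.card := h.rank_le_card (h.down_closed hA hX)
  have h3 : X.card ≤ A.card := Finset.card_le_card hX
  have h2 : r A ≤ r X + (A.card - X.card) := rank_le_add h _ hA hX (by omega)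
  omega

lemma exists_circuit (h : IsSemimatroid (· ∈ Δ) r) :
    ∀ n : ℕ, ∀ {A : Finset α}, A.card ≤ n → A ∈ Δ → r A < A.card →
      ∃ C, C ⊆ A ∧ IsCircuit Δ r C := by
  intro n
  induction n with
  | zero => intro A hc hA hr; omega
  | succ n ih =>
    intro A hc hA hr
    by_cases hall : ∀ X : Finset α, X ⊂ A → r X = X.card
    · exact ⟨A, Finset.Subset.refl A, hA, hr, hall⟩
    · push_neg at hall
      obtain ⟨X, hXA, hXr⟩ := hall
      have hXΔ := h.down_closed hA hXA.subset
      have h1 : r X < X.card := lt_of_le_of_ne (h.rank_le_card hXΔ) hXr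
      have h2 : X.card < A.card := Finset.card_lt_card hXA
      obtain ⟨C, hCX, hC⟩ := ih (by omega) hXΔ h1
      exact ⟨C, hCX.trans hXA.subset, hC⟩

lemma circuit_nonempty {C : Finset α} (hC : IsCircuit Δ r C) : C.Nonempty := by
  rcases Finset.eq_empty_or_nonempty C with he | hne
  · exfalso; have := hC.2.1; subst he; simp at this
  · exact hne

lemma circuit_erase_rank (h : IsSemimatroid (· ∈ Δ) r) {C : Finset α}
    (hC : IsCircuit Δ r C) {m : α} (hm : m ∈ C) :
    r (C.erase m) = r C := by
  obtain ⟨hCΔ, hr, hmin⟩ := hC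
  have h1 : C.erase m ⊂ C := Finset.erase_ssubset hm
  have h2 : r (C.erase m) = (C.erase m).card := hmin _ h1
  have h3 : (C.erase m).card = C.card - 1 := Finset.card_erase_of_mem hm
  have h4 : r (C.erase m) ≤ r C :=
    h.rank_mono (h.down_closed hCΔ h1.subset) hCΔ h1.subset
  have h5 : 0 < C.card := Finset.card_pos.2 ⟨m, hm⟩
  omega

/-- Key closure-extension lemma. -/
lemma clext (h : IsSemimatroid (· ∈ Δ) r) {e : α} {B D : Finset α}
    (hIns : insert e B ∈ Δ) (hr : r (insert e B) = r B)
    (hD : D ∈ Δ) (hBD : B ⊆ D) :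
    insert e D ∈ Δ ∧ r (insert e D) = r D := by
  by_cases he : e ∈ D
  · rw [Finset.insert_eq_self.2 he]; exact ⟨hD, rfl⟩
  · have hcap : insert e B ∩ D = B := by
      ext x
      simp only [Finset.mem_inter, Finset.mem_insert]
      constructor
      · rintro ⟨(rfl | hxB), hxD⟩
        · exact absurd hxD he
        · exact hxB
      · intro hx; exact ⟨Or.inr hx, hBD hx⟩
    have hrc : r (insert e B) = r (insert e B ∩ D) := by rw [hcap, hr]
    have hcup : insert e B ∪ D = insert e D := by
      ext x
      simp only [Finset.mem_union, Finset.mem_insert]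
      constructor
      · rintro ((rfl | hxB) | hxD)
        · exact Or.inl rfl
        · exact Or.inr (hBD hxB)
        · exact Or.inr hxD
      · rintro (rfl | hxD)
        · exact Or.inl (Or.inl rfl)
        · exact Or.inr hxD
    have hun : insert e D ∈ Δ := by
      have := h.union_mem hIns hD hrc
      rwa [hcup] at this
    refine ⟨hun, ?_⟩
    have hsub := h.submodular hIns hD (by rw [hcup]; exact hun)
    rw [hcup, hcap, hr] at hsub
    have hmono : r D ≤ r (insert e D) :=
      h.rank_mono hD hun (Finset.subset_insert _ _)
    omega

lemma min_mem_Tset (h : IsSemimatroid (· ∈ Δ) r) {A C : Finset α} (hA : A ∈ Δ)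
    (hC : IsCircuit Δ r C) (hne : C.Nonempty)
    (hsub : C.erase (C.min' hne) ⊆ A) : C.min' hne ∈ Tset Δ r A := by
  set m := C.min' hne with hm
  have hmC : m ∈ C := Finset.min'_mem C hne
  have hEB : C.erase m ⊆ Bf A m := by
    intro x hx
    have hxC := Finset.mem_of_mem_erase hx
    have hxne : x ≠ m := Finset.ne_of_mem_erase hx
    have hlex : m ≤ x := Finset.min'_le C x hxC
    exact Finset.mem_filter.2 ⟨hsub hx, lt_of_le_of_ne hlex (Ne.symm hxne)⟩
  have hBΔ : Bf A m ∈ Δ := h.down_closed hA (Bf_subset A m)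
  have hr1 : r (C.erase m) = r C := circuit_erase_rank h hC hmC
  have hCins : insert m (C.erase m) ∈ Δ := by
    rw [Finset.insert_erase hmC]; exact hC.1
  have hrins : r (insert m (C.erase m)) = r (C.erase m) := by
    rw [Finset.insert_erase hmC]; omega
  obtain ⟨h1, h2⟩ := clext h hCins hrins hBΔ hEB
  exact mem_Tset.2 ⟨h1, h2⟩

lemma dep_hbc (h : IsSemimatroid (· ∈ Δ) r) {A : Finset α} (hA : A ∈ Δ)
    (hdep : r A < A.card) : HasBrokenCircuit Δ r A := by
  obtain ⟨C, hCA, hC⟩ := exists_circuit h A.card le_rfl hA hdep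
  have hne := circuit_nonempty hC
  exact ⟨C, hC, hne, (Finset.erase_subset _ _).trans hCA⟩

lemma Tset_nonempty_of_hbc (h : IsSemimatroid (· ∈ Δ) r) {A : Finset α} (hA : A ∈ Δ)
    (hbc : HasBrokenCircuit Δ r A) : (Tset Δ r A).Nonempty := by
  obtain ⟨C, hC, hne, hsub⟩ := hbc
  exact ⟨C.min' hne, min_mem_Tset h hA hC hne hsub⟩

lemma hbc_of_mem_Tset (h : IsSemimatroid (· ∈ Δ) r) {A : Finset α} {e : α}
    (hA : A ∈ Δ) (he : e ∈ Tset Δ r A) : HasBrokenCircuit Δ r A := by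
  by_cases hdep : r A < A.card
  · exact dep_hbc h hA hdep
  · have hind : r A = A.card := le_antisymm (h.rank_le_card hA) (by omega)
    obtain ⟨hIns, hr⟩ := mem_Tset.1 he
    set B := Bf A e with hB
    have hBA : B ⊆ A := Bf_subset A e
    have heB : e ∉ B := not_mem_Bf A e
    have hrB : r B = B.card := indep_subset h hA hind hBA
    by_cases heA : e ∈ A
    · exfalso
      have hins_sub : insert e B ⊆ A := Finset.insert_subset heA hBA
      have hx : r (insert e B) = (insert e B).card := indep_subset h hA hind hins_sub
      rw [Finset.card_insert_of_notMem heB] at hx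
      omega
    · have hcard : r (insert e B) < (insert e B).card := by
        rw [Finset.card_insert_of_notMem heB]; omega
      obtain ⟨C, hCsub, hC⟩ := exists_circuit h _ le_rfl hIns hcard
      have hCne := circuit_nonempty hC
      have heC : e ∈ C := by
        by_contra heC
        have hCB : C ⊆ B := by
          intro x hx
          rcases Finset.mem_insert.1 (hCsub hx) with rfl | hxB
          · exact absurd hx heC
          · exact hxB
        have hCi := indep_subset h hA hind (hCB.trans hBA)
        have := hC.2.1; omega
      have hmin : C.min' hCne = e := by
        apply le_antisymm (Finset.min'_le C e heC)
        have hmem := Finset.min'_mem C hCne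
        rcases Finset.mem_insert.1 (hCsub hmem) with h1 | h1
        · exact le_of_eq h1.symm
        · exact le_of_lt (Finset.mem_filter.1 h1).2
      refine ⟨C, hC, hCne, ?_⟩
      rw [hmin]
      intro x hx
      rcases Finset.mem_insert.1 (hCsub (Finset.mem_of_mem_erase hx)) with h1 | h1
      · exact absurd h1 (Finset.ne_of_mem_erase hx)
      · exact hBA h1

end Aux

section Tog
variable {α : Type*} [LinearOrder α] {Δ : Finset (Finset α)} {r : Finset α → ℕ}

open Classical in
/-- Toggle the minimal active element. -/
noncomputable def tog (Δ : Finset (Finset α)) (r : Finset α → ℕ) (A : Finset α) : Finset α :=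
  if hne : (Tset Δ r A).Nonempty then
    if (Tset Δ r A).min' hne ∈ A then A.erase ((Tset Δ r A).min' hne)
    else insert ((Tset Δ r A).min' hne) A
  else A

/-- A smaller element in the toggled Tset was already active. -/
lemma Tset_lt_transfer (h : IsSemimatroid (· ∈ Δ) r) {A : Finset α} (hA : A ∈ Δ)
    (hne : (Tset Δ r A).Nonempty) {f : α}
    (hf : f < (Tset Δ r A).min' hne)
    (hmem : f ∈ Tset Δ r (if (Tset Δ r A).min' hne ∈ A
      then A.erase ((Tset Δ r A).min' hne) else insert ((Tset Δ r A).min' hne) A)) :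
    f ∈ Tset Δ r A := by
  set e := (Tset Δ r A).min' hne with he
  obtain ⟨hIns, hr⟩ := mem_Tset.1 ((Tset Δ r A).min'_mem hne)
  set B := Bf A e with hBdef
  set X := Bf A f with hXdef
  have hBX : B ⊆ X := by
    intro x hx
    obtain ⟨hxA, hlt⟩ := Finset.mem_filter.1 hx
    exact Finset.mem_filter.2 ⟨hxA, hf.trans hlt⟩
  have hXΔ : X ∈ Δ := h.down_closed hA (Bf_subset A f)
  by_cases heA : e ∈ A
  · rw [if_pos heA] at hmem
    obtain ⟨hIns', hr'⟩ := mem_Tset.1 hmem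
    rw [Bf_erase_of_lt] at hIns' hr'
    set X' := X.erase e with hX'def
    have heX : e ∈ X := Finset.mem_filter.2 ⟨heA, hf⟩
    have hBX' : B ⊆ X' := by
      intro x hx
      obtain ⟨hxA, hlt⟩ := Finset.mem_filter.1 hx
      exact Finset.mem_erase.2 ⟨ne_of_gt hlt, hBX hx⟩
    -- from insert f X' ∈ Δ with rank equal, extend by e
    obtain ⟨k1, k2⟩ := clext h hIns hr hIns' (hBX'.trans (Finset.subset_insert _ _))
    have hcomm : insert e (insert f X') = insert f X := by
      rw [Finset.insert_comm, Finset.insert_erase heX]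
    rw [hcomm] at k1 k2
    obtain ⟨k3, k4⟩ := clext h hIns hr (h.down_closed hXΔ (Finset.erase_subset _ _)) hBX'
    rw [Finset.insert_erase heX] at k4
    refine mem_Tset.2 ⟨k1, ?_⟩
    rw [k2, hr', k4]
  · rw [if_neg heA] at hmem
    obtain ⟨hIns', hr'⟩ := mem_Tset.1 hmem
    rw [Bf_insert_of_lt A hf] at hIns' hr'
    -- hIns' : insert f (insert e X) ∈ Δ, hr' : r (insert f (insert e X)) = r (insert e X)
    have hIns2 : insert f (insert e X) ∈ Δ := hIns'
    have hr2 : r (insert f (insert e X)) = r (insert e X) := hr'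
    have hfX : insert f X ∈ Δ :=
      h.down_closed hIns2 (Finset.insert_subset_insert f (Finset.subset_insert e X))
    obtain ⟨k1, k2⟩ := clext h hIns hr hfX (hBX.trans (Finset.subset_insert _ _))
    have c1 : r (insert e (insert f X)) = r (insert f X) := k2
    rw [Finset.insert_comm] at c1
    obtain ⟨k3, k4⟩ := clext h hIns hr hXΔ hBX
    have c4 : r (insert e X) = r X := k4
    refine mem_Tset.2 ⟨hfX, ?_⟩
    show r (insert f X) = r X
    rw [← c1, hr2, c4]

lemma tog_spec (h : IsSemimatroid (· ∈ Δ) r) {A : Finset α} (hA : A ∈ Δ)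
    (hne : (Tset Δ r A).Nonempty) :
    tog Δ r A ∈ Δ ∧ r (tog Δ r A) = r A ∧ (Tset Δ r (tog Δ r A)).Nonempty ∧
      tog Δ r (tog Δ r A) = A ∧
      ((tog Δ r A).card = A.card + 1 ∨ A.card = (tog Δ r A).card + 1) := by
  classical
  set e := (Tset Δ r A).min' hne with he
  obtain ⟨hIns, hr⟩ := mem_Tset.1 ((Tset Δ r A).min'_mem hne)
  set B := Bf A e with hBdef
  have hBΔ : B ∈ Δ := h.down_closed hA (Bf_subset A e)
  by_cases heA : e ∈ A
  · have htog : tog Δ r A = A.erase e := by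
      rw [tog, dif_pos hne, if_pos heA]
    set A' := A.erase e with hA'def
    have hA'Δ : A' ∈ Δ := h.down_closed hA (Finset.erase_subset _ _)
    have hBA' : B ⊆ A' := by
      intro x hx
      obtain ⟨hxA, hlt⟩ := Finset.mem_filter.1 hx
      exact Finset.mem_erase.2 ⟨ne_of_gt hlt, hxA⟩
    obtain ⟨m1, m2⟩ := clext h hIns hr hA'Δ hBA'
    rw [Finset.insert_erase heA] at m2
    have heT' : e ∈ Tset Δ r A' := by
      refine mem_Tset.2 ?_
      rw [hA'def, Bf_erase_self]
      exact ⟨hIns, hr⟩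
    have hne' : (Tset Δ r A').Nonempty := ⟨e, heT'⟩
    have hmin' : (Tset Δ r A').min' hne' = e := by
      apply le_antisymm (Finset.min'_le _ _ heT')
      by_contra hcon
      push_neg at hcon
      have hmm := (Tset Δ r A').min'_mem hne'
      have : (Tset Δ r A').min' hne' ∈ Tset Δ r A := by
        refine Tset_lt_transfer h hA hne (by rw [← he]; exact hcon) ?_
        rw [← he, if_pos heA]
        exact hmm
      exact absurd (Finset.min'_le _ _ this) (not_le_of_gt (by rw [← he]; exact hcon))
    have htog2 : tog Δ r A' = A := by
      rw [tog, dif_pos hne', hmin', if_neg (Finset.notMem_erase e A),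
        Finset.insert_erase heA]
    refine ⟨by rw [htog]; exact hA'Δ, by rw [htog]; exact m2.symm, ?_, ?_, ?_⟩
    · rw [htog]; exact hne'
    · rw [htog]; exact htog2
    · right
      rw [htog, Finset.card_erase_of_mem heA]
      have : 0 < A.card := Finset.card_pos.2 ⟨e, heA⟩
      omega
  · have htog : tog Δ r A = insert e A := by
      rw [tog, dif_pos hne, if_neg heA]
    set A' := insert e A with hA'def
    obtain ⟨m1, m2⟩ := clext h hIns hr hA (Bf_subset A e)
    have heT' : e ∈ Tset Δ r A' := by
      refine mem_Tset.2 ?_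
      rw [hA'def, Bf_insert_self]
      exact ⟨hIns, hr⟩
    have hne' : (Tset Δ r A').Nonempty := ⟨e, heT'⟩
    have hmin' : (Tset Δ r A').min' hne' = e := by
      apply le_antisymm (Finset.min'_le _ _ heT')
      by_contra hcon
      push_neg at hcon
      have hmm := (Tset Δ r A').min'_mem hne'
      have : (Tset Δ r A').min' hne' ∈ Tset Δ r A := by
        refine Tset_lt_transfer h hA hne (by rw [← he]; exact hcon) ?_
        rw [← he, if_neg heA]
        exact hmm
      exact absurd (Finset.min'_le _ _ this) (not_le_of_gt (by rw [← he]; exact hcon))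
    have htog2 : tog Δ r A' = A := by
      rw [tog, dif_pos hne', hmin', if_pos (Finset.mem_insert_self e A),
        Finset.erase_insert heA]
    refine ⟨by rw [htog]; exact m1, by rw [htog]; exact m2, ?_, ?_, ?_⟩
    · rw [htog]; exact hne'
    · rw [htog]; exact htog2
    · left
      rw [htog, Finset.card_insert_of_notMem heA]

end Tog

/-- The face-count generating polynomial of the broken circuit complex of a
semimatroid satisfies `Σ_{σ ∈ BC(𝒞)} q^{|σ|} = q^{r_𝒞} · T_𝒞((q+1)/q, 0)` for `q ≠ 0`. -/
theorem brokenCircuit_face_generating_polynomial {α : Type*} [LinearOrder α]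
    (Δ : Finset (Finset α)) (r : Finset α → ℕ)
    (h : IsSemimatroid (· ∈ Δ) r) :
    ∀ q : ℝ, q ≠ 0 →
      ∑ σ ∈ bcFinset Δ r, q ^ σ.card = q ^ (rkOf Δ r) * tutte Δ r ((q + 1) / q) 0 := by
  intro q hq
  classical
  have hinv : (q + 1) / q - 1 = q⁻¹ := by field_simp; ring
  have hrhs : q ^ (rkOf Δ r) * tutte Δ r ((q + 1) / q) 0
      = ∑ σ ∈ Δ, (-1 : ℝ) ^ (σ.card - r σ) * q ^ (r σ) := by
    rw [tutte, Finset.mul_sum]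
    refine Finset.sum_congr rfl ?_
    intro σ hσ
    have hle : r σ ≤ rkOf Δ r := Finset.le_sup hσ
    rw [hinv]
    have h1 : q ^ (rkOf Δ r) * q⁻¹ ^ (rkOf Δ r - r σ) = q ^ (r σ) := by
      have hk : q ^ (rkOf Δ r) = q ^ (r σ) * q ^ (rkOf Δ r - r σ) := by
        rw [← pow_add, Nat.add_sub_cancel' hle]
      rw [hk, mul_assoc, ← mul_pow, mul_inv_cancel₀ hq, one_pow, mul_one]
    have h2 : ((0:ℝ) - 1) = -1 := by norm_num
    rw [h2, ← mul_assoc, h1]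
    ring
  have hzero : ∑ σ ∈ Δ.filter (fun σ => HasBrokenCircuit Δ r σ),
      (-1 : ℝ) ^ (σ.card - r σ) * q ^ (r σ) = 0 := by
    refine Finset.sum_involution (fun A _ => tog Δ r A) ?_ ?_ ?_ ?_
    · intro a ha
      obtain ⟨hA, hbc⟩ := Finset.mem_filter.1 ha
      have hne := Tset_nonempty_of_hbc h hA hbc
      obtain ⟨hΔ', hr', hne'', hinv', hcd⟩ := tog_spec h hA hne
      have hra : r a ≤ a.card := h.rank_le_card hA
      have hra' : r (tog Δ r a) ≤ (tog Δ r a).card := h.rank_le_card hΔ'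
      rcases hcd with hc1 | hc1
      · have hd : (tog Δ r a).card - r (tog Δ r a) = (a.card - r a) + 1 := by omega
        rw [hd, hr', pow_succ]
        ring
      · have hd : a.card - r a = ((tog Δ r a).card - r (tog Δ r a)) + 1 := by omega
        rw [hd, hr', pow_succ]
        ring
    · intro a ha _
      obtain ⟨hA, hbc⟩ := Finset.mem_filter.1 ha
      have hne := Tset_nonempty_of_hbc h hA hbc
      obtain ⟨hΔ', hr', hne'', hinv', hcd⟩ := tog_spec h hA hne
      intro heq
      have heq' : tog Δ r a = a := heq
      rw [heq'] at hcd
      omega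
    · intro a ha
      obtain ⟨hA, hbc⟩ := Finset.mem_filter.1 ha
      have hne := Tset_nonempty_of_hbc h hA hbc
      obtain ⟨hΔ', hr', hne'', hinv', hcd⟩ := tog_spec h hA hne
      refine Finset.mem_filter.2 ⟨hΔ', ?_⟩
      obtain ⟨x, hx⟩ := hne''
      exact hbc_of_mem_Tset h hΔ' hx
    · intro a ha
      obtain ⟨hA, hbc⟩ := Finset.mem_filter.1 ha
      have hne := Tset_nonempty_of_hbc h hA hbc
      obtain ⟨hΔ', hr', hne'', hinv', hcd⟩ := tog_spec h hA hne
      exact hinv'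
  have hset : bcFinset Δ r = Δ.filter (fun σ => ¬ HasBrokenCircuit Δ r σ) := by
    ext σ
    simp [bcFinset]
  rw [hrhs, ← Finset.sum_filter_add_sum_filter_not Δ (fun σ => HasBrokenCircuit Δ r σ),
    hzero, zero_add]
  refine Finset.sum_congr hset ?_
  intro σ hσ
  obtain ⟨hA, hnbc⟩ := Finset.mem_filter.1 hσ
  have hrs : r σ = σ.card := by
    by_contra hcon
    exact hnbc (dep_hbc h hA (lt_of_le_of_ne (h.rank_le_card hA) hcon))
  rw [hrs, Nat.sub_self, pow_zero, one_mul]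
end
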